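/- A commutative semigroup variety V is an upper-modular element of the lattice Com if and only if V ∨ SL is an upper-modular element of Com; likewise, V is a costandard element of Com if and only if V ∨ SL is a costandard element of Com. -/

import Mathlib

/-!
Formalization framework: semigroup varieties as Galois-closed equational theories
over the free semigroup on countably many letters.  A variety is represented by
its equational theory; the order `V ≤ W` ("V is a subvariety of W") is reverse
inclusion of theories.  `Com` is the lattice of commutative semigroup varieties,
realized as the subtype of varieties whose theory contains the commutative law.
-/

open FreeSemigroup

/-- Words: elements of the free semigroup over a countably infinite alphabet. -/
abbrev Word : Type := FreeSemigroup ℕ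

/-- A semigroup identity `u = v`. -/
abbrev SgId : Type := Word × Word

/-- `spow a n = a ^ (n + 1)` in any (multiplicative) semigroup. -/
def spow {M : Type*} [Mul M] (a : M) : ℕ → M
  | 0 => a
  | n + 1 => a * spow a n

/-- A semigroup `S` satisfies the identity `e.1 = e.2`. -/
def SatS (S : Type) [Semigroup S] (e : SgId) : Prop :=
  ∀ σ : ℕ → S, FreeSemigroup.lift σ e.1 = FreeSemigroup.lift σ e.2

/-- `S` is a model of the set of identities `E`. -/
def Models (S : Type) [Semigroup S] (E : Set SgId) : Prop :=
  ∀ e ∈ E, SatS S e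

/-- The equational theory generated by `E`: all identities holding in every
model of `E` (by Birkhoff's theorem this is exactly deductive closure). -/
def eqTh (E : Set SgId) : Set SgId :=
  { e | ∀ (S : Type) [Semigroup S], Models S E → SatS S e }

theorem subset_eqTh (E : Set SgId) : E ⊆ eqTh E := by
  intro e he S _ hS
  exact hS e he

theorem eqTh_mono {E F : Set SgId} (h : E ⊆ F) : eqTh E ⊆ eqTh F := by
  intro e he S _ hS
  exact he S fun e' he' => hS e' (h he')

theorem eqTh_idem (E : Set SgId) : eqTh (eqTh E) = eqTh E := by
  refine Set.Subset.antisymm ?_ (subset_eqTh _)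
  intro e he S _ hS
  exact he S fun e' he' => he' S hS

/-- A semigroup variety, given by its (Galois-closed) equational theory. -/
structure SgVariety where
  th : Set SgId
  closed : eqTh th = th

theorem SgVariety.ext' {V W : SgVariety} (h : V.th = W.th) : V = W := by
  cases V; cases W; cases h; rfl

/-- The variety defined by a set of identities. -/
def varOf (E : Set SgId) : SgVariety :=
  ⟨eqTh E, eqTh_idem E⟩

/-- `V ≤ W` iff `V` is a subvariety of `W`, i.e. the theory of `W` is contained
in the theory of `V`. -/
instance : PartialOrder SgVariety where
  le V W := W.th ⊆ V.th
  le_refl V := Set.Subset.refl _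
  le_trans a b c h1 h2 := Set.Subset.trans h2 h1
  le_antisymm a b h1 h2 := SgVariety.ext' (Set.Subset.antisymm h2 h1)

/-- The lattice **SEM** of all semigroup varieties: join is intersection of
theories; meet is the variety defined by the union of the theories. -/
instance : Lattice SgVariety :=
  { (inferInstance : PartialOrder SgVariety) with
    sup := fun V W =>
      ⟨V.th ∩ W.th, by
        refine Set.Subset.antisymm (Set.subset_inter ?_ ?_) (subset_eqTh _)
        · exact (eqTh_mono Set.inter_subset_left).trans (le_of_eq V.closed)
        · exact (eqTh_mono Set.inter_subset_right).trans (le_of_eq W.closed)⟩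
    le_sup_left := fun V W => Set.inter_subset_left
    le_sup_right := fun V W => Set.inter_subset_right
    sup_le := fun V W U h1 h2 => Set.subset_inter h1 h2
    inf := fun V W => varOf (V.th ∪ W.th)
    inf_le_left := fun V W => Set.subset_union_left.trans (subset_eqTh _)
    inf_le_right := fun V W => Set.subset_union_right.trans (subset_eqTh _)
    le_inf := fun U V W h1 h2 =>
      (eqTh_mono (Set.union_subset h1 h2)).trans (le_of_eq U.closed) }

/-- The letters `x`, `y`, `z`. -/
def xw : Word := FreeSemigroup.of 0
def yw : Word := FreeSemigroup.of 1
def zw : Word := FreeSemigroup.of 2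

/-- The commutative law `xy = yx`. -/
def commId : SgId := (xw * yw, yw * xw)

/-- The lattice **Com**: commutative semigroup varieties. -/
abbrev ComVariety : Type := { V : SgVariety // commId ∈ V.th }

instance : Lattice ComVariety :=
  { (inferInstance : PartialOrder ComVariety) with
    sup := fun V W => ⟨V.1 ⊔ W.1, ⟨V.2, W.2⟩⟩
    le_sup_left := fun V W => @le_sup_left SgVariety _ V.1 W.1
    le_sup_right := fun V W => @le_sup_right SgVariety _ V.1 W.1
    sup_le := fun V W U h1 h2 => @sup_le SgVariety _ V.1 W.1 U.1 h1 h2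
    inf := fun V W => ⟨V.1 ⊓ W.1, subset_eqTh _ (Set.mem_union_left _ V.2)⟩
    inf_le_left := fun V W => @inf_le_left SgVariety _ V.1 W.1
    inf_le_right := fun V W => @inf_le_right SgVariety _ V.1 W.1
    le_inf := fun U V W h1 h2 => @le_inf SgVariety _ U.1 V.1 W.1 h1 h2 }

/-- The trivial variety `T`. -/
def trivialVar : SgVariety := varOf Set.univ

/-- The variety `COM` of all commutative semigroups. -/
def COMvar : SgVariety := varOf {commId}

/-- The variety `SL` of semilattices. -/
def SLvar : SgVariety := varOf {commId, (xw * xw, xw)}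

/-- `C_m = var{xᵐ = xᵐ⁺¹, xy = yx}` for `m ≥ 1`, and `C_0 = T`. -/
def Cvar : ℕ → SgVariety
  | 0 => trivialVar
  | m + 1 => varOf {commId, (spow xw m, spow xw (m + 1))}

def Tcom : ComVariety := ⟨trivialVar, subset_eqTh _ (Set.mem_univ _)⟩
def COMcom : ComVariety := ⟨COMvar, subset_eqTh _ rfl⟩
def SLcom : ComVariety := ⟨SLvar, subset_eqTh _ (Set.mem_insert _ _)⟩
def Ccom (m : ℕ) : ComVariety :=
  ⟨Cvar m, by
    cases m with
    | zero => exact subset_eqTh _ (Set.mem_univ _)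
    | succ m => exact subset_eqTh _ (Set.mem_insert _ _)⟩

/-- A semigroup (nonempty, with the given multiplication) is a group. -/
def IsGroupS (S : Type) [Semigroup S] : Prop :=
  ∃ e : S, (∀ a : S, e * a = a ∧ a * e = a) ∧ ∀ a : S, ∃ b : S, a * b = e ∧ b * a = e

/-- A nilsemigroup: there is a zero element and some power of every element is zero. -/
def IsNilS (S : Type) [Semigroup S] : Prop :=
  ∃ z : S, (∀ a : S, z * a = z ∧ a * z = z) ∧ ∀ a : S, ∃ n : ℕ, spow a n = z

/-- A group variety: all its (nonempty) members are groups. -/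
def IsGroupVariety (V : SgVariety) : Prop :=
  ∀ (S : Type) [Semigroup S], Nonempty S → Models S V.th → IsGroupS S

/-- A nil-variety: all its (nonempty) members are nilsemigroups. -/
def IsNilVariety (V : SgVariety) : Prop :=
  ∀ (S : Type) [Semigroup S], Nonempty S → Models S V.th → IsNilS S

/-- A combinatorial variety: all groups in it are singletons. -/
def IsCombinatorial (V : SgVariety) : Prop :=
  ∀ (S : Type) [Semigroup S], Models S V.th → IsGroupS S → Subsingleton S

/-- A periodic variety: satisfies `xⁿ = xⁿ⁺ᵏ` for some `n, k ≥ 1`. -/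
def IsPeriodic (V : SgVariety) : Prop :=
  ∃ n k : ℕ, (spow xw n, spow xw (n + k + 1)) ∈ V.th

/-- The letter `k` occurs in the word `w`. -/
def occursIn (k : ℕ) (w : Word) : Prop := k = w.head ∨ k ∈ w.tail

/-- `S` satisfies the identity `w = 0` (i.e. the system `wx = xw = w`, `x` fresh):
every value of `w` in `S` is a (two-sided) zero element. -/
def SatZeroS (S : Type) [Semigroup S] (w : Word) : Prop :=
  ∀ (σ : ℕ → S) (a : S),
    FreeSemigroup.lift σ w * a = FreeSemigroup.lift σ w ∧
      a * FreeSemigroup.lift σ w = FreeSemigroup.lift σ w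

/-- The variety `V` satisfies the identity `w = 0`. -/
def VSatZero (V : SgVariety) (w : Word) : Prop :=
  ∀ (S : Type) [Semigroup S], Models S V.th → SatZeroS S w

/-- The words `x²`, `x³`, `x²y`, `xy²`, `x²yz`. -/
def w_xx : Word := xw * xw
def w_xxx : Word := xw * xw * xw
def w_xxy : Word := xw * xw * yw
def w_xyy : Word := xw * yw * yw
def w_xxyz : Word := xw * xw * yw * zw

/-- The identity `x²y = xy²`. -/
def idQ : SgId := (w_xxy, w_xyy)

/-- The pair of identities expressing `w = 0`, with `k` a fresh letter. -/
def zeroPair (w : Word) (k : ℕ) : Set SgId :=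
  {(w * FreeSemigroup.of k, w), (FreeSemigroup.of k * w, w)}

/-- `xprodTo n = x₁x₂⋯xₙ` (for `n ≥ 1`), on the letters `0, …, n-1`. -/
def xprodTo : ℕ → Word
  | 0 => FreeSemigroup.of 0
  | 1 => FreeSemigroup.of 0
  | n + 2 => xprodTo (n + 1) * FreeSemigroup.of (n + 1)

/-- `I = var{x²y = xy², x²yz = 0, xy = yx}`. -/
def Ivar : SgVariety := varOf ({commId, idQ} ∪ zeroPair w_xxyz 3)

/-- `K = var{x²y = 0, xy = yx}`. -/
def Kvar : SgVariety := varOf ({commId} ∪ zeroPair w_xxy 2)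

/-- `L = var{x² = 0, xy = yx}`. -/
def Lvar : SgVariety := varOf ({commId} ∪ zeroPair w_xx 1)

/-- `I_n = var{x²yz = x₁⋯xₙ = 0, x²y = xy², xy = yx}`. -/
def Ivarn (n : ℕ) : SgVariety :=
  varOf ({commId, idQ} ∪ zeroPair w_xxyz 3 ∪ zeroPair (xprodTo n) n)

/-- `J = var{x²yz = x³ = 0, x²y = xy², xy = yx}`. -/
def Jvar : SgVariety := varOf ({commId, idQ} ∪ zeroPair w_xxyz 3 ∪ zeroPair w_xxx 1)

/-- `J_n = var{x²yz = x³ = x₁⋯xₙ = 0, x²y = xy², xy = yx}`. -/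
def Jvarn (n : ℕ) : SgVariety :=
  varOf ({commId, idQ} ∪ zeroPair w_xxyz 3 ∪ zeroPair w_xxx 1 ∪ zeroPair (xprodTo n) n)

/-- `K_n = var{x²y = x₁⋯xₙ = 0, xy = yx}`. -/
def Kvarn (n : ℕ) : SgVariety :=
  varOf ({commId} ∪ zeroPair w_xxy 2 ∪ zeroPair (xprodTo n) n)

/-- `L_n = var{x² = x₁⋯xₙ = 0, xy = yx}`. -/
def Lvarn (n : ℕ) : SgVariety :=
  varOf ({commId} ∪ zeroPair w_xx 1 ∪ zeroPair (xprodTo n) n)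

/-- Generators of `ZR(U)`: the commutative law together with all 0-reduced
identities (in the form of the corresponding identity pairs) holding in `U`. -/
def ZRgen (U : SgVariety) : Set SgId :=
  {commId} ∪ { e : SgId | ∃ (w : Word) (k : ℕ), ¬ occursIn k w ∧ VSatZero U w ∧
      (e = (w * FreeSemigroup.of k, w) ∨ e = (FreeSemigroup.of k * w, w)) }

/-- `ZR(U)`: the variety given by the commutative law and all 0-reduced
identities holding in `U`. -/
def ZRvar (U : SgVariety) : SgVariety := varOf (ZRgen U)

def Icom : ComVariety := ⟨Ivar, subset_eqTh _ (Set.mem_union_left _ (Set.mem_insert _ _))⟩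

def ZRcom (U : SgVariety) : ComVariety :=
  ⟨ZRvar U, subset_eqTh _ (Set.mem_union_left _ rfl)⟩

/-- All nilsemigroups in `V` are nilpotent of degree ≤ n, i.e. satisfy `x₁⋯xₙ = 0`. -/
def HasDegLe (V : SgVariety) (n : ℕ) : Prop :=
  ∀ (S : Type) [Semigroup S], Nonempty S → Models S V.th → IsNilS S → SatZeroS S (xprodTo n)

/-- `deg V = d` (with `d = ⊤` meaning infinite degree). -/
def DegIs (V : SgVariety) (d : ℕ∞) : Prop :=
  (∃ n : ℕ, 0 < n ∧ d = (n : ℕ∞) ∧ IsLeast {m : ℕ | 0 < m ∧ HasDegLe V m} n) ∨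
    (d = ⊤ ∧ ∀ n : ℕ, 0 < n → ¬ HasDegLe V n)

/-- Upper-modular element of a lattice. -/
def IsUpperModular {L : Type*} [Lattice L] (a : L) : Prop :=
  ∀ b c : L, b ≤ a → a ⊓ (b ⊔ c) = b ⊔ (a ⊓ c)

/-- Codistributive element of a lattice. -/
def IsCodistributive {L : Type*} [Lattice L] (a : L) : Prop :=
  ∀ b c : L, a ⊓ (b ⊔ c) = (a ⊓ b) ⊔ (a ⊓ c)

/-- Costandard element of a lattice. -/
def IsCostandard {L : Type*} [Lattice L] (a : L) : Prop :=
  ∀ b c : L, (a ⊓ b) ⊔ c = (a ⊔ c) ⊓ (b ⊔ c)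

/-- Modular element of a lattice. -/
def IsModularElt {L : Type*} [Lattice L] (a : L) : Prop :=
  ∀ b c : L, b ≤ c → (a ⊔ b) ⊓ c = (a ⊓ c) ⊔ b

/-- Neutral element of a lattice, via the median characterization
(equivalent to: every triple containing `a` generates a distributive
sublattice; Grätzer, "Lattice Theory: Foundation", Theorem 254). -/
def IsNeutralElt {L : Type*} [Lattice L] (a : L) : Prop :=
  ∀ b c : L, (a ⊓ b) ⊔ (b ⊓ c) ⊔ (c ⊓ a) = (a ⊔ b) ⊓ (b ⊔ c) ⊓ (c ⊔ a)


/-! ### Auxiliary development for Statement 18 -/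

namespace Aux18

open FreeSemigroup

/-- The list of letters of a word. -/
def wl (w : Word) : List ℕ := w.head :: w.tail

theorem wl_mul (u v : Word) : wl (u * v) = wl u ++ wl v := rfl

theorem wl_of (n : ℕ) : wl (FreeSemigroup.of n) = [n] := rfl

theorem wl_ne_nil (w : Word) : wl w ≠ [] := by simp [wl]

/-- Content of a word. -/
def cont (w : Word) : Finset ℕ := (wl w).toFinset

theorem cont_mul (u v : Word) : cont (u * v) = cont u ∪ cont v := by
  simp [cont, wl_mul]

theorem cont_of (n : ℕ) : cont (FreeSemigroup.of n) = {n} := rfl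

theorem cont_nonempty (w : Word) : (cont w).Nonempty := ⟨w.head, by simp [cont, wl]⟩

theorem mem_cont {a : ℕ} {w : Word} : a ∈ cont w ↔ a ∈ wl w := by simp [cont]

/-- Substitution of words for letters. -/
def sub (θ : ℕ → Word) : Word → Word := fun w => FreeSemigroup.lift θ w

theorem sub_of (θ : ℕ → Word) (n : ℕ) : sub θ (FreeSemigroup.of n) = θ n := by
  simp [sub]

theorem sub_mul (θ : ℕ → Word) (u v : Word) : sub θ (u * v) = sub θ u * sub θ v := by
  simp [sub]

theorem lift_sub {T : Type*} [Semigroup T] (σ : ℕ → T) (θ : ℕ → Word) (w : Word) :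
    FreeSemigroup.lift σ (sub θ w) = FreeSemigroup.lift (fun l => FreeSemigroup.lift σ (θ l)) w := by
  induction w using FreeSemigroup.recOnMul with
  | ih1 x => simp [sub]
  | ih2 x y hx hy => simp only [sub_mul, map_mul, hx, hy]

theorem wl_sub (θ : ℕ → Word) (w : Word) :
    wl (sub θ w) = (wl w).flatMap (fun l => wl (θ l)) := by
  induction w using FreeSemigroup.recOnMul with
  | ih1 x => simp [sub, wl_of]
  | ih2 x y hx hy => simp [sub_mul, wl_mul, hx, hy]

theorem mem_cont_sub {θ : ℕ → Word} {w : Word} {a : ℕ} :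
    a ∈ cont (sub θ w) ↔ ∃ l ∈ cont w, a ∈ cont (θ l) := by
  simp [cont, wl_sub]

theorem cont_sub_of_subset {θ : ℕ → Word} {w : Word} {γ : Finset ℕ}
    (h : ∀ l ∈ cont w, cont (θ l) ⊆ γ) : cont (sub θ w) ⊆ γ := by
  intro a ha
  rcases mem_cont_sub.1 ha with ⟨l, hl, hal⟩
  exact h l hl hal

/-- `sub θ` is the identity if `θ` is `of` on the content. -/
theorem sub_eq_self {θ : ℕ → Word} {w : Word} (h : ∀ l ∈ cont w, θ l = FreeSemigroup.of l) :
    sub θ w = w := by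
  induction w using FreeSemigroup.recOnMul with
  | ih1 x => rw [sub_of]; exact h x (by simp [cont_of])
  | ih2 x y hx hy =>
      rw [sub_mul, hx, hy]
      · intro l hl; exact h l (by rw [cont_mul]; exact Finset.mem_union_right _ hl)
      · intro l hl; exact h l (by rw [cont_mul]; exact Finset.mem_union_left _ hl)

/-! #### Theory closure lemmas -/

theorem eqTh_refl (E : Set SgId) (w : Word) : (w, w) ∈ eqTh E := fun _ _ _ _ => rfl

theorem eqTh_symm {E : Set SgId} {p q : Word} (h : (p, q) ∈ eqTh E) : (q, p) ∈ eqTh E :=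
  fun S _ hS σ => (h S hS σ).symm

theorem eqTh_trans {E : Set SgId} {p q r : Word} (h1 : (p, q) ∈ eqTh E)
    (h2 : (q, r) ∈ eqTh E) : (p, r) ∈ eqTh E :=
  fun S _ hS σ => (h1 S hS σ).trans (h2 S hS σ)

theorem eqTh_mul {E : Set SgId} {p q r s : Word} (h1 : (p, q) ∈ eqTh E)
    (h2 : (r, s) ∈ eqTh E) : (p * r, q * s) ∈ eqTh E := by
  intro S _ hS σ
  simp only [map_mul]
  rw [h1 S hS σ, h2 S hS σ]

theorem eqTh_mulr {E : Set SgId} {p q : Word} (w : Word) (h : (p, q) ∈ eqTh E) :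
    (p * w, q * w) ∈ eqTh E := eqTh_mul h (eqTh_refl E w)

theorem eqTh_subst {E : Set SgId} {p q : Word} (θ : ℕ → Word) (h : (p, q) ∈ eqTh E) :
    (sub θ p, sub θ q) ∈ eqTh E := by
  intro S _ hS σ
  rw [lift_sub, lift_sub]
  exact h S hS (fun l => FreeSemigroup.lift σ (θ l))

theorem models_eqTh {T : Type} [Semigroup T] {E : Set SgId} (h : Models T E) :
    Models T (eqTh E) := fun e he => he T h

theorem models_of_eqTh {T : Type} [Semigroup T] {E : Set SgId} (h : Models T (eqTh E)) :
    Models T E := fun e he => h e (subset_eqTh E he)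

/-! #### Evaluation into the adjoined-unit monoid -/

theorem lift_eq_prod {T : Type*} [Semigroup T] (σ : ℕ → T) (w : Word) :
    ((FreeSemigroup.lift σ w : T) : WithOne T)
      = ((wl w).map (fun l => ((σ l : T) : WithOne T))).prod := by
  induction w using FreeSemigroup.recOnMul with
  | ih1 x => simp [wl_of]
  | ih2 x y hx hy =>
      rw [map_mul, WithOne.coe_mul, hx, hy, wl_mul, List.map_append, List.prod_append]

theorem coe_spow {T : Type*} [Semigroup T] (a : T) (n : ℕ) :
    ((spow a n : T) : WithOne T) = (a : WithOne T) ^ (n + 1) := by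
  induction n with
  | zero => simp [spow]
  | succ n ih => rw [spow, WithOne.coe_mul, ih, ← pow_succ']

theorem lift_spow {T : Type*} [Semigroup T] (σ : ℕ → T) (w : Word) (n : ℕ) :
    FreeSemigroup.lift σ (spow w n) = spow (FreeSemigroup.lift σ w) n := by
  induction n with
  | zero => rfl
  | succ n ih => rw [spow, spow, map_mul, ih]

theorem wl_spow (w : Word) (n : ℕ) :
    wl (spow w n) = (List.replicate (n + 1) (wl w)).flatten := by
  induction n with
  | zero => simp [spow]
  | succ n ih => rw [spow, wl_mul, ih]; simp [List.replicate_succ]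

theorem cont_spow (w : Word) (n : ℕ) : cont (spow w n) = cont w := by
  induction n with
  | zero => rfl
  | succ n ih => rw [spow, cont_mul, ih, Finset.union_self]

/-! #### Extraction of laws from models -/

theorem comm_of_sat {T : Type} [Semigroup T] (h : SatS T commId) : ∀ x y : T, x * y = y * x := by
  intro x y
  have := h (fun n => if n = 0 then x else y)
  simpa [commId, xw, yw, map_mul] using this

theorem idem_of_sat {T : Type} [Semigroup T] (h : SatS T (xw * xw, xw)) : ∀ x : T, x * x = x := by
  intro x
  have := h (fun _ => x)
  simpa [xw, map_mul] using this

theorem idem_pow {M : Type*} [Monoid M] {x : M} (h : x * x = x) :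
    ∀ n : ℕ, x ^ (n + 1) = x := by
  intro n
  induction n with
  | zero => simp
  | succ n ih => rw [pow_succ, ih, h]

theorem prod_map_eq_prod_toFinset {M : Type*} [CommMonoid M] (f : ℕ → M)
    (hf : ∀ a, f a * f a = f a) (l : List ℕ) :
    (l.map f).prod = ∏ a ∈ l.toFinset, f a := by
  have h1 : (l.map f).prod = ((↑l : Multiset ℕ).map f).prod := by
    rw [Multiset.map_coe, Multiset.prod_coe]
  rw [h1, Finset.prod_multiset_map_count]
  apply Finset.prod_congr
  · rfl
  · intro a ha
    have hc : 1 ≤ (↑l : Multiset ℕ).count a := by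
      rw [Nat.one_le_iff_ne_zero, ← Nat.pos_iff_ne_zero, Multiset.count_pos]
      simpa using ha
    obtain ⟨n, hn⟩ : ∃ n, (↑l : Multiset ℕ).count a = n + 1 :=
      ⟨_, (Nat.succ_pred_eq_of_pos hc).symm⟩
    rw [hn, idem_pow (hf a)]

/-- The set of equal-content identities. -/
def SEqC : Set SgId := {e | cont e.1 = cont e.2}

theorem commId_mem_SEqC : commId ∈ SEqC := by
  simp [SEqC, commId, cont_mul, Finset.union_comm]

/-- An equal-content identity holds in every commutative idempotent semigroup. -/
theorem sat_of_eqc {T : Type} [Semigroup T] (hc : SatS T commId)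
    (hi : SatS T (xw * xw, xw)) {p q : Word} (h : cont p = cont q) : SatS T (p, q) := by
  intro σ
  have hcomm := comm_of_sat hc
  have hidem := idem_of_sat hi
  letI : CommSemigroup T := { mul_comm := hcomm }
  have key : ∀ w : Word, ((FreeSemigroup.lift σ w : T) : WithOne T)
      = ∏ a ∈ cont w, ((σ a : T) : WithOne T) := by
    intro w
    rw [lift_eq_prod, prod_map_eq_prod_toFinset]
    · rfl
    · intro a
      rw [← WithOne.coe_mul, hidem]
  have : ((FreeSemigroup.lift σ p : T) : WithOne T) = ((FreeSemigroup.lift σ q : T) : WithOne T) := by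
    rw [key, key, h]
  exact WithOne.coe_inj.1 this

theorem SEqC_subset_S {p q : Word} (h : cont p = cont q) : (p, q) ∈ SLvar.th := by
  intro T _ hT
  exact sat_of_eqc (hT commId (Set.mem_insert _ _)) (hT _ (Set.mem_insert_of_mem _ rfl)) h

/-- The two-element semilattice. -/
def BB : Type := Bool

instance : Mul BB := ⟨fun a b => ((a : Bool) && (b : Bool) : Bool)⟩

instance : Semigroup BB :=
  { mul_assoc := fun a b c => by
      show ((((a : Bool) && b) && c : Bool)) = (((a : Bool) && (b && c) : Bool))
      exact Bool.and_assoc a b c }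

theorem BB_mul (a b : BB) : a * b = ((a : Bool) && (b : Bool) : Bool) := rfl

theorem lift_BB (σ : ℕ → BB) (w : Word) :
    FreeSemigroup.lift σ w = ((wl w).all (fun l => (σ l : Bool)) : Bool) := by
  induction w using FreeSemigroup.recOnMul with
  | ih1 x => simp [wl_of]; exact (Bool.and_true _).symm
  | ih2 x y hx hy =>
      rw [map_mul, hx, hy, wl_mul]; exact List.all_append.symm

theorem models_BB : Models BB {commId, (xw * xw, xw)} := by
  intro e he σ
  rcases he with he | he
  · subst he
    show FreeSemigroup.lift σ (xw * yw) = FreeSemigroup.lift σ (yw * xw)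
    rw [lift_BB, lift_BB]
    simp [wl_mul, xw, yw, wl_of, Bool.and_comm]
    show ((σ 0 : Bool) && ((σ 1 : Bool) && true)) = ((σ 1 : Bool) && ((σ 0 : Bool) && true))
    generalize (σ 0 : Bool) = a
    generalize (σ 1 : Bool) = b
    cases a <;> cases b <;> rfl
  · rw [Set.mem_singleton_iff] at he
    subst he
    show FreeSemigroup.lift σ (xw * xw) = FreeSemigroup.lift σ xw
    rw [lift_BB, lift_BB]
    simp [wl_mul, xw, wl_of]
    show ((σ 0 : Bool) && ((σ 0 : Bool) && true)) = ((σ 0 : Bool) && true)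
    generalize (σ 0 : Bool) = a
    cases a <;> rfl

theorem S_subset_SEqC : SLvar.th ⊆ SEqC := by
  intro e he
  have hsat : SatS BB e := he BB models_BB
  have key : ∀ a : ℕ, (a ∈ cont e.1 ↔ a ∈ cont e.2) := by
    intro a
    have h := hsat (fun l => (decide (l ≠ a) : Bool))
    replace h := (lift_BB _ e.1).symm.trans (h.trans (lift_BB _ e.2))
    have hiff : ∀ w : Word,
        ((wl w).all (fun l => ((fun l => (decide (l ≠ a) : Bool)) l : Bool)) = false
          ↔ a ∈ cont w) := by
      intro w
      rw [List.all_eq_false]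
      constructor
      · rintro ⟨x, hx, hdx⟩
        have : x = a := by simpa using hdx
        rw [mem_cont]; exact this ▸ hx
      · intro ha
        exact ⟨a, mem_cont.1 ha, by simp⟩
    constructor
    · intro ha
      exact (hiff e.2).1 (by rw [← h]; exact (hiff e.1).2 ha)
    · intro ha
      exact (hiff e.1).1 (by rw [h]; exact (hiff e.2).2 ha)
  rcases e with ⟨p, q⟩
  show cont p = cont q
  ext a
  exact key a

theorem Schar : SLvar.th = SEqC := by
  apply Set.Subset.antisymm S_subset_SEqC
  intro e he
  exact SEqC_subset_S he

/-! #### Collapse: a content-unequal identity plus the semilattice laws trivialize -/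

theorem absorb_pow_aux {M : Type*} [Monoid M] {x y : M} (hxy : x * y = x) :
    ∀ n : ℕ, x * y ^ n = x := by
  intro n
  induction n with
  | zero => simp
  | succ n ih => rw [pow_succ, ← mul_assoc, ih, hxy]

theorem collapse_mul {T : Type} [Semigroup T] (hc : SatS T commId) (hi : SatS T (xw * xw, xw))
    {u₀ v₀ : Word} (hsat : SatS T (u₀, v₀)) {k : ℕ} (hk : k ∈ cont u₀) (hk' : k ∉ cont v₀) :
    ∀ A B : T, A * B = B := by
  intro A B
  have hcomm := comm_of_sat hc
  have hidem := idem_of_sat hi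
  letI : CommSemigroup T := { mul_comm := hcomm }
  set σ : ℕ → T := fun l => if l = k then A * B else B with hσ
  have key : ∀ w : Word, ((FreeSemigroup.lift σ w : T) : WithOne T)
      = ∏ a ∈ cont w, ((σ a : T) : WithOne T) := by
    intro w
    rw [lift_eq_prod, prod_map_eq_prod_toFinset]
    · rfl
    · intro a
      rw [← WithOne.coe_mul, hidem]
  have hu : ((FreeSemigroup.lift σ u₀ : T) : WithOne T) = ((A * B : T) : WithOne T) := by
    rw [key, ← Finset.mul_prod_erase _ _ hk]
    have h2 : ∀ a ∈ (cont u₀).erase k, ((σ a : T) : WithOne T) = ((B : T) : WithOne T) := by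
      intro a ha
      have : a ≠ k := Finset.ne_of_mem_erase ha
      simp [hσ, this]
    rw [Finset.prod_congr rfl h2, Finset.prod_const]
    have hσk : ((σ k : T) : WithOne T) = ((A * B : T) : WithOne T) := by simp [hσ]
    rw [hσk]
    apply absorb_pow_aux
    rw [← WithOne.coe_mul, mul_assoc, hidem]
  have hv : ((FreeSemigroup.lift σ v₀ : T) : WithOne T) = ((B : T) : WithOne T) := by
    rw [key]
    have h2 : ∀ a ∈ cont v₀, ((σ a : T) : WithOne T) = ((B : T) : WithOne T) := by
      intro a ha
      have : a ≠ k := fun h => hk' (h ▸ ha)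
      simp [hσ, this]
    rw [Finset.prod_congr rfl h2, Finset.prod_const]
    obtain ⟨a0, ha0⟩ := cont_nonempty v₀
    obtain ⟨n, hn⟩ : ∃ n, (cont v₀).card = n + 1 :=
      ⟨_, (Nat.succ_pred_eq_of_pos (Finset.card_pos.2 ⟨a0, ha0⟩)).symm⟩
    rw [hn, idem_pow]
    rw [← WithOne.coe_mul, hidem]
  have := hsat σ
  have : ((A * B : T) : WithOne T) = ((B : T) : WithOne T) := by
    rw [← hu, ← hv, this]
  exact WithOne.coe_inj.1 this

theorem collapse_all {T : Type} [Semigroup T] (hc : SatS T commId) (hi : SatS T (xw * xw, xw))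
    {u₀ v₀ : Word} (hsat : SatS T (u₀, v₀)) {k : ℕ} (hk : k ∈ cont u₀) (hk' : k ∉ cont v₀) :
    ∀ A B : T, A = B := by
  intro A B
  have h1 := collapse_mul hc hi hsat hk hk' A B
  have h2 := collapse_mul hc hi hsat hk hk' B A
  have h3 := comm_of_sat hc A B
  rw [← h2, ← h3, h1]

theorem exists_unequal_letter {p q : Word} (h : cont p ≠ cont q) :
    (∃ k, k ∈ cont p ∧ k ∉ cont q) ∨ (∃ k, k ∈ cont q ∧ k ∉ cont p) := by
  by_contra hcon
  push_neg at hcon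
  apply h
  ext a
  exact ⟨fun ha => hcon.1 a ha, fun ha => hcon.2 a ha⟩

/-- If a set of identities contains the commutative law together with a
content-unequal identity, then adding the semilattice laws trivializes it. -/
theorem eqTh_union_S_eq_univ {X : Set SgId} {u₀ v₀ : Word} (hm : (u₀, v₀) ∈ X)
    {k : ℕ} (hk : k ∈ cont u₀) (hk' : k ∉ cont v₀) :
    eqTh (SLvar.th ∪ X) = Set.univ := by
  apply Set.eq_univ_of_forall
  intro e
  intro T _ hT σ
  have hS : Models T SLvar.th := fun e' he' => hT e' (Set.mem_union_left _ he')
  have hc : SatS T commId := hS commId (subset_eqTh _ (Set.mem_insert _ _))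
  have hi : SatS T (xw * xw, xw) := hS _ (subset_eqTh _ (Set.mem_insert_of_mem _ rfl))
  have hsat : SatS T (u₀, v₀) := hT _ (Set.mem_union_right _ hm)
  exact collapse_all hc hi hsat hk hk' _ _

/-! #### The absorption law derived from a content-unequal identity -/

theorem prod_map_indicator {M : Type*} [CommMonoid M] (d : M) (k : ℕ) (l : List ℕ) :
    (l.map (fun x => if x = k then d else 1)).prod = d ^ l.count k := by
  induction l with
  | nil => simp
  | cons a l ih =>
      by_cases hak : a = k
      · subst hak
        rw [List.map_cons, List.prod_cons, if_pos rfl, ih, List.count_cons_self, pow_succ,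
          mul_comm]
      · rw [List.map_cons, List.prod_cons, if_neg hak, one_mul, ih,
          List.count_cons_of_ne hak]

theorem eval_two_letter {T : Type} [Semigroup T] (hcomm : ∀ x y : T, x * y = y * x)
    (σ : ℕ → T) (k : ℕ) (A B : T) (hσ : ∀ l, σ l = if l = k then A * B else B) (w : Word) :
    ((FreeSemigroup.lift σ w : T) : WithOne T)
      = ((A : T) : WithOne T) ^ ((wl w).count k) * ((B : T) : WithOne T) ^ ((wl w).length) := by
  letI : CommSemigroup T := { mul_comm := hcomm }
  rw [lift_eq_prod]
  have hf : ∀ l : ℕ, ((σ l : T) : WithOne T)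
      = (if l = k then ((A : T) : WithOne T) else 1) * ((B : T) : WithOne T) := by
    intro l
    rw [hσ l]
    by_cases hlk : l = k
    · simp [hlk]
    · simp [hlk]
  calc ((wl w).map (fun l => ((σ l : T) : WithOne T))).prod
      = ((wl w).map (fun l => (if l = k then ((A : T) : WithOne T) else 1)
          * ((B : T) : WithOne T))).prod := by
        congr 1
        exact List.map_congr_left (fun l _ => hf l)
    _ = ((wl w).map (fun l => if l = k then ((A : T) : WithOne T) else 1)).prod
          * ((wl w).map (fun _ => ((B : T) : WithOne T))).prod := by
        rw [← List.prod_map_mul]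
    _ = ((A : T) : WithOne T) ^ ((wl w).count k) * ((B : T) : WithOne T) ^ ((wl w).length) := by
        rw [prod_map_indicator,
          List.prod_eq_pow_card ((wl w).map (fun _ => ((B : T) : WithOne T)))
            ((B : T) : WithOne T)
            (fun x hx => by rcases List.mem_map.1 hx with ⟨a, _, rfl⟩; rfl),
          List.length_map]

/-- The fundamental absorption law in any commutative model of a theory with a
content-unequal identity:  `x ^ aa * y ^ Q = y ^ Q` for all large `Q`. -/
theorem law_of_unequal {X : Set SgId} (hcm : commId ∈ X) {u₀ v₀ : Word} (hm : (u₀, v₀) ∈ X)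
    {k : ℕ} (hk : k ∈ cont u₀) (hk' : k ∉ cont v₀) :
    ∃ aa Q₀ : ℕ, 1 ≤ aa ∧ 1 ≤ Q₀ ∧ ∀ (T : Type) [Semigroup T], Models T X →
      ∀ (x y : T) (Q : ℕ), Q₀ ≤ Q →
        ((x : T) : WithOne T) ^ aa * ((y : T) : WithOne T) ^ Q = ((y : T) : WithOne T) ^ Q := by
  classical
  set aa := (wl u₀).count k with haa
  set b := (wl u₀).length with hb
  set m := (wl v₀).length with hmm
  have haa1 : 1 ≤ aa := by
    rw [haa, Nat.one_le_iff_ne_zero, ← Nat.pos_iff_ne_zero, List.count_pos_iff]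
    exact mem_cont.1 hk
  have hkv : (wl v₀).count k = 0 := by
    rw [List.count_eq_zero]
    exact fun hmem => hk' (mem_cont.2 hmem)
  have hm1 : 1 ≤ m := by
    rw [hmm]
    have := wl_ne_nil v₀
    cases hv : wl v₀ with
    | nil => exact absurd hv this
    | cons a l => simp
  refine ⟨aa, aa * (aa + b) + m, haa1, by omega, ?_⟩
  intro T _ hT x y Q hQ
  have hc : SatS T commId := hT commId hcm
  have hcomm := comm_of_sat hc
  letI : CommSemigroup T := { mul_comm := hcomm }
  -- base law : ∀ A B, ↑A^aa * ↑B^b = ↑B^m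
  have base : ∀ A B : T, ((A : T) : WithOne T) ^ aa * ((B : T) : WithOne T) ^ b
      = ((B : T) : WithOne T) ^ m := by
    intro A B
    have hsat := hT _ hm (fun l => if l = k then A * B else B)
    have h1 := eval_two_letter hcomm _ k A B (fun l => rfl) u₀
    have h2 := eval_two_letter hcomm _ k A B (fun l => rfl) v₀
    have := congrArg (fun t : T => (t : WithOne T)) hsat
    simp only at this
    rw [h1, h2, hkv, pow_zero, one_mul] at this
    exact this
  -- (i) ∀ B, ↑B^(aa+b) = ↑B^m
  have law1 : ∀ B : T, ((B : T) : WithOne T) ^ (aa + b) = ((B : T) : WithOne T) ^ m := by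
    intro B
    have := base B B
    rw [← pow_add] at this
    exact this
  -- (ii) ∀ A B, ↑A^aa * ↑B^(aa+b) = ↑B^m
  have law2 : ∀ A B : T, ((A : T) : WithOne T) ^ aa * ((B : T) : WithOne T) ^ (aa + b)
      = ((B : T) : WithOne T) ^ m := by
    intro A B
    have := base (A * B) B
    rw [WithOne.coe_mul, mul_pow, mul_assoc, ← pow_add] at this
    exact this
  -- periodicity: ∀ B, ↑B^m = ↑B^(m+aa)
  have per : ∀ B : T, ((B : T) : WithOne T) ^ m = ((B : T) : WithOne T) ^ (m + aa) := by
    intro B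
    have h3 := law2 B B
    rw [← pow_add] at h3
    have h4 : ((B : T) : WithOne T) ^ (m + aa) = ((B : T) : WithOne T) ^ m := by
      calc ((B : T) : WithOne T) ^ (m + aa)
          = ((B : T) : WithOne T) ^ m * ((B : T) : WithOne T) ^ aa := pow_add _ _ _
        _ = ((B : T) : WithOne T) ^ (aa + b) * ((B : T) : WithOne T) ^ aa := by rw [law1 B]
        _ = ((B : T) : WithOne T) ^ (aa + (aa + b)) := by rw [← pow_add]; congr 1; ring
        _ = ((B : T) : WithOne T) ^ m := h3
    exact h4.symm
  have per' : ∀ (B : T) (s : ℕ), ((B : T) : WithOne T) ^ (m + s)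
      = ((B : T) : WithOne T) ^ (m + s + aa) := by
    intro B s
    rw [show m + s = s + m by ring, show s + m + aa = s + (m + aa) by ring, pow_add, pow_add,
      ← per B]
  -- spread : ∀ B s j, ↑B^(m+s) = ↑B^(m+s+j*aa)
  have spread : ∀ (B : T) (s j : ℕ), ((B : T) : WithOne T) ^ (m + s)
      = ((B : T) : WithOne T) ^ (m + s + j * aa) := by
    intro B s j
    induction j with
    | zero => simp
    | succ j ih =>
        rw [ih, show m + s + (j + 1) * aa = m + (s + j * aa) + aa by ring,
          ← per' B (s + j * aa), show m + (s + j * aa) = m + s + j * aa by ring]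
  -- (v) ∀ A B, ↑A^aa * ↑B^(aa*(aa+b)) = ↑B^(aa*m)
  have law5 : ∀ A B : T, ((A : T) : WithOne T) ^ aa * ((B : T) : WithOne T) ^ (aa * (aa + b))
      = ((B : T) : WithOne T) ^ (aa * m) := by
    intro A B
    have := law2 A (spow B (aa - 1))
    rw [coe_spow, show aa - 1 + 1 = aa from by omega, ← pow_mul, ← pow_mul] at this
    exact this
  -- final assembly
  obtain ⟨t, ht⟩ : ∃ t, Q = aa * (aa + b) + t := ⟨Q - aa * (aa + b), by omega⟩
  obtain ⟨s, hs⟩ : ∃ s, t = m + s := ⟨t - m, by omega⟩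
  have step1 : ((x : T) : WithOne T) ^ aa * ((y : T) : WithOne T) ^ Q
      = ((y : T) : WithOne T) ^ (aa * m + t) := by
    rw [ht, pow_add, ← mul_assoc, law5]
    rw [← pow_add]
  rw [step1]
  -- now show ↑y^(aa*m+t) = ↑y^Q
  have e1 : aa * m + t = m + (aa * m + s) := by omega
  have e2 : Q = m + (aa * (aa + b) + s) := by omega
  have h1 := spread y (aa * m + s) (aa + b)
  have h2 := spread y (aa * (aa + b) + s) m
  rw [e1, e2, h1, h2]
  congr 1
  ring

/-- Iterated absorption: `x ^ (aa*cc) * y ^ Q = y ^ Q`. -/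
theorem law_iterT {T : Type} [Semigroup T] {aa Q₀ : ℕ}
    (hlaw : ∀ (x y : T) (Q : ℕ), Q₀ ≤ Q →
      ((x : T) : WithOne T) ^ aa * ((y : T) : WithOne T) ^ Q = ((y : T) : WithOne T) ^ Q) :
    ∀ (x y : T) (cc Q : ℕ), Q₀ ≤ Q →
      ((x : T) : WithOne T) ^ (aa * cc) * ((y : T) : WithOne T) ^ Q
        = ((y : T) : WithOne T) ^ Q := by
  intro x y cc Q hQ
  induction cc with
  | zero => simp
  | succ cc ih =>
      rw [show aa * (cc + 1) = aa * cc + aa by ring, pow_add, mul_assoc, hlaw x y Q hQ, ih]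

/-! #### Equational deduction and completeness -/

inductive Ded (E : Set SgId) : Word → Word → Prop
  | base {e : SgId} (he : e ∈ E) (θ : ℕ → Word) : Ded E (sub θ e.1) (sub θ e.2)
  | refl (w : Word) : Ded E w w
  | symm {u v : Word} : Ded E u v → Ded E v u
  | trans {u v w : Word} : Ded E u v → Ded E v w → Ded E u w
  | mul_left (w : Word) {u v : Word} : Ded E u v → Ded E (w * u) (w * v)
  | mul_right (w : Word) {u v : Word} : Ded E u v → Ded E (u * w) (v * w)

theorem Ded.mul_congr {E : Set SgId} {u u' v v' : Word} (h1 : Ded E u u') (h2 : Ded E v v') :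
    Ded E (u * v) (u' * v') :=
  Ded.trans (Ded.mul_right v h1) (Ded.mul_left u' h2)

def DedSetoid (E : Set SgId) : Setoid Word := ⟨Ded E, ⟨Ded.refl, Ded.symm, Ded.trans⟩⟩

def FreeModel (E : Set SgId) : Type := Quotient (DedSetoid E)

/-- Class of a word in the free model. -/
def fm (E : Set SgId) (w : Word) : FreeModel E := Quotient.mk (DedSetoid E) w

instance (E : Set SgId) : Semigroup (FreeModel E) where
  mul := Quotient.map₂ (· * ·) (fun _ _ hu _ _ hv => Ded.mul_congr hu hv)
  mul_assoc := by
    intro a b c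
    induction a using Quotient.ind
    induction b using Quotient.ind
    induction c using Quotient.ind
    exact congrArg (Quotient.mk _) (mul_assoc _ _ _)

theorem fm_mul (E : Set SgId) (u v : Word) : fm E u * fm E v = fm E (u * v) := rfl

theorem fm_lift (E : Set SgId) (σq : ℕ → FreeModel E) (θ : ℕ → Word)
    (hθ : ∀ n, σq n = fm E (θ n)) (w : Word) :
    FreeSemigroup.lift σq w = fm E (sub θ w) := by
  induction w using FreeSemigroup.recOnMul with
  | ih1 x => rw [FreeSemigroup.lift_of, hθ x, sub_of]
  | ih2 x y hx hy => rw [map_mul, hx, hy, sub_mul, fm_mul]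

theorem models_freeModel (E : Set SgId) : Models (FreeModel E) E := by
  intro e he σq
  classical
  set θ : ℕ → Word := fun n => (σq n).out with hθdef
  have hθ : ∀ n, σq n = fm E (θ n) := fun n => (Quotient.out_eq (σq n)).symm
  rw [fm_lift E σq θ hθ, fm_lift E σq θ hθ]
  exact Quotient.sound (Ded.base he θ)

theorem sub_of_id (w : Word) : sub FreeSemigroup.of w = w :=
  sub_eq_self (fun _ _ => rfl)

/-- Completeness of equational deduction. -/
theorem complete {E : Set SgId} {p q : Word} (h : (p, q) ∈ eqTh E) : Ded E p q := by
  have := h (FreeModel E) (models_freeModel E) (fun n => fm E (FreeSemigroup.of n))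
  rw [fm_lift E _ FreeSemigroup.of (fun _ => rfl), fm_lift E _ FreeSemigroup.of (fun _ => rfl),
    sub_of_id, sub_of_id] at this
  exact Quotient.exact this

/-! #### Chains of elementary replacements inside closed theories -/

/-- One step: the pair belongs to (closed theory) `A` or to `C`. -/
def StepRel (A C : Set SgId) : Word → Word → Prop := fun p q => (p, q) ∈ A ∨ (p, q) ∈ C

theorem stepRel_symm {A C : Set SgId} (hA : eqTh A = A) (hC : eqTh C = C) :
    Symmetric (StepRel A C) := by
  rintro p q (h | h)
  · exact Or.inl (by rw [← hA] at h ⊢; exact eqTh_symm h)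
  · exact Or.inr (by rw [← hC] at h ⊢; exact eqTh_symm h)

theorem ded_to_rtg {A C : Set SgId} (hA : eqTh A = A) (hC : eqTh C = C) {p q : Word}
    (h : Ded (A ∪ C) p q) : Relation.ReflTransGen (StepRel A C) p q := by
  induction h with
  | base he θ =>
      apply Relation.ReflTransGen.single
      rcases he with he | he
      · exact Or.inl (by rw [← hA]; exact eqTh_subst θ (subset_eqTh A he))
      · exact Or.inr (by rw [← hC]; exact eqTh_subst θ (subset_eqTh C he))
  | refl w => exact Relation.ReflTransGen.refl
  | symm h ih => exact @Std.Symm.symm _ _ (@Relation.ReflTransGen.stdSymm _ (StepRel A C) ⟨fun a b h => stepRel_symm hA hC h⟩) _ _ ih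
  | trans h1 h2 ih1 ih2 => exact ih1.trans ih2
  | mul_left w h ih =>
      refine Relation.ReflTransGen.lift (fun u => w * u) ?_ _ _ ih
      rintro a b (hab | hab)
      · refine Or.inl ?_
        rw [← hA] at hab ⊢
        exact eqTh_mul (eqTh_refl A w) hab
      · refine Or.inr ?_
        rw [← hC] at hab ⊢
        exact eqTh_mul (eqTh_refl C w) hab
  | mul_right w h ih =>
      refine Relation.ReflTransGen.lift (fun u => u * w) ?_ _ _ ih
      rintro a b (hab | hab)
      · refine Or.inl ?_
        rw [← hA] at hab ⊢
        exact eqTh_mulr w hab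
      · refine Or.inr ?_
        rw [← hC] at hab ⊢
        exact eqTh_mulr w hab

theorem rtg_to_chain {r : Word → Word → Prop} {p q : Word}
    (h : Relation.ReflTransGen r p q) :
    ∃ (n : ℕ) (c : ℕ → Word), c 0 = p ∧ c n = q ∧ ∀ i < n, r (c i) (c (i + 1)) := by
  induction h with
  | refl => exact ⟨0, fun _ => p, rfl, rfl, by omega⟩
  | @tail b q' h1 h2 ih =>
      rcases ih with ⟨n, c, h0, hn, hs⟩
      refine ⟨n + 1, fun i => if i ≤ n then c i else q', by simp [h0], by simp, ?_⟩
      intro i hi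
      by_cases hin : i < n
      · have h1' : i ≤ n := by omega
        have h2' : i + 1 ≤ n := by omega
        simp only [if_pos h1', if_pos h2']
        exact hs i hin
      · have hieq : i = n := by omega
        subst hieq
        simp only [if_pos (le_refl i), if_neg (by omega : ¬ i + 1 ≤ i)]
        rw [hn]
        exact h2

/-! #### Product helper lemmas -/

theorem prod_map_update_mul {M : Type*} [CommMonoid M] (f : ℕ → M) (d : M) (k : ℕ)
    (l : List ℕ) :
    (l.map (fun x => if x = k then f x * d else f x)).prod
      = (l.map f).prod * d ^ l.count k := by
  have hpt : ∀ x : ℕ, (if x = k then f x * d else f x) = f x * (if x = k then d else 1) := by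
    intro x
    by_cases hx : x = k <;> simp [hx]
  simp only [hpt]
  rw [List.prod_map_mul, prod_map_indicator]

theorem prod_map_ite_bool {M : Type*} [CommMonoid M] (f : ℕ → M) (d : M) (p : ℕ → Bool)
    (l : List ℕ) :
    (l.map (fun x => if p x then f x else d)).prod
      = ((l.filter p).map f).prod * d ^ (l.countP (fun x => ! p x)) := by
  induction l with
  | nil => simp
  | cons a l ih =>
      by_cases hpa : p a = true
      · rw [List.map_cons, List.prod_cons, if_pos hpa, List.filter_cons_of_pos hpa,
          List.map_cons, List.prod_cons, List.countP_cons_of_neg (p := fun x => ! p x) (a := a) (by simp [hpa]), ih,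
          mul_assoc]
      · rw [List.map_cons, List.prod_cons, if_neg hpa, List.filter_cons_of_neg hpa,
          List.countP_cons_of_pos (p := fun x => ! p x) (a := a) (by simp [Bool.not_eq_true'] ; simpa using hpa), ih,
          pow_succ]
        rw [mul_comm d, mul_assoc]

/-! #### The key equal-content consequences of a content-unequal identity -/

section Facts

variable {Y : Set SgId} {u v : Word} {T : Type} [Semigroup T]

/-- P1 : absorption of powers of words over the content of `u` into `u`. -/
theorem fact_P1 (hYc : eqTh Y = Y) (huv : (u, v) ∈ Y)
    {k : ℕ} (hku : k ∈ cont u) (hkv : k ∉ cont v)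
    (hcomm : ∀ x y : T, x * y = y * x) (σ : ℕ → T)
    (hY : ∀ p q : Word, (p, q) ∈ Y → cont p = cont q →
      FreeSemigroup.lift σ p = FreeSemigroup.lift σ q)
    (g : Word) (hg : cont g ⊆ cont u) (t : ℕ) :
    ((FreeSemigroup.lift σ u : T) : WithOne T)
      = ((FreeSemigroup.lift σ u : T) : WithOne T)
        * ((FreeSemigroup.lift σ g : T) : WithOne T) ^ ((t + 1) * (wl u).count k) := by
  classical
  letI : CommSemigroup T := { mul_comm := hcomm }
  set θ : ℕ → Word :=
    fun l => if l = k then FreeSemigroup.of k * spow g t else FreeSemigroup.of l with hθ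
  have hsubv : sub θ v = v := by
    apply sub_eq_self
    intro l hl
    have hlk : l ≠ k := fun h => hkv (h ▸ hl)
    simp [hθ, hlk]
  have hmemY : (u, sub θ u) ∈ Y := by
    have h1 : (sub θ u, sub θ v) ∈ eqTh Y := eqTh_subst θ (by rw [hYc]; exact huv)
    rw [hsubv] at h1
    have h2 : (u, sub θ u) ∈ eqTh Y :=
      eqTh_trans (by rw [hYc]; exact huv) (eqTh_symm h1)
    rw [hYc] at h2
    exact h2
  have hcont : cont (sub θ u) = cont u := by
    apply Finset.Subset.antisymm
    · apply cont_sub_of_subset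
      intro l hl
      by_cases hlk : l = k
      · rw [hθ]
        simp only [if_pos hlk, cont_mul, cont_spow, cont_of]
        intro a ha
        rcases Finset.mem_union.1 ha with ha | ha
        · rw [Finset.mem_singleton] at ha
          subst ha
          exact hku
        · exact hg ha
      · rw [hθ]
        simp only [if_neg hlk, cont_of]
        intro a ha
        rw [Finset.mem_singleton] at ha
        subst ha
        exact hl
    · intro l hl
      apply mem_cont_sub.2 ⟨l, hl, ?_⟩
      by_cases hlk : l = k
      · simp [hθ, if_pos hlk, cont_mul, cont_of, hlk]
      · simp [hθ, hlk, cont_of]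
  have hval : FreeSemigroup.lift σ u = FreeSemigroup.lift σ (sub θ u) :=
    hY u (sub θ u) hmemY hcont.symm
  have hv2 : ((FreeSemigroup.lift σ (sub θ u) : T) : WithOne T)
      = ((FreeSemigroup.lift σ u : T) : WithOne T)
        * ((FreeSemigroup.lift σ g : T) : WithOne T) ^ ((t + 1) * (wl u).count k) := by
    rw [lift_sub, lift_eq_prod]
    have hpt : ∀ l ∈ wl u, ((FreeSemigroup.lift σ (θ l) : T) : WithOne T)
        = (fun x => if x = k
            then ((σ x : T) : WithOne T) * ((FreeSemigroup.lift σ g : T) : WithOne T) ^ (t + 1)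
            else ((σ x : T) : WithOne T)) l := by
      intro l _
      by_cases hlk : l = k
      · have h1 : θ l = FreeSemigroup.of k * spow g t := by rw [hθ]; simp [hlk]
        rw [h1, hlk]
        simp [map_mul, lift_spow, coe_spow]
      · have h2 : θ l = FreeSemigroup.of l := by rw [hθ]; simp [hlk]
        rw [h2]
        simp [hlk]
    rw [List.map_congr_left hpt, prod_map_update_mul, ← pow_mul, ← lift_eq_prod]
  rw [← hv2, ← hval]

/-- P2 : the swap rule. -/
theorem fact_P2 (hYc : eqTh Y = Y) (huv : (u, v) ∈ Y) (hcmY : commId ∈ Y)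
    (σ : ℕ → T)
    (hY : ∀ p q : Word, (p, q) ∈ Y → cont p = cont q →
      FreeSemigroup.lift σ p = FreeSemigroup.lift σ q) (n : ℕ) :
    ((FreeSemigroup.lift σ u : T) : WithOne T)
        * ((FreeSemigroup.lift σ v : T) : WithOne T) ^ (n + 1)
      = ((FreeSemigroup.lift σ u : T) : WithOne T) ^ (n + 1)
        * ((FreeSemigroup.lift σ v : T) : WithOne T) := by
  have hmul_spow : ∀ (S : Type) [Semigroup S], ∀ (a : S) (n : ℕ),
      a * spow a n = spow a n * a := by
    intro S _ a n
    induction n with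
    | zero => rfl
    | succ n ih =>
        show a * (a * spow a n) = (a * spow a n) * a
        rw [ih, ← mul_assoc, ih]
  have hmem : (u * spow v n, spow u n * v) ∈ Y := by
    rw [← hYc]
    intro T' _ hT' σ'
    have h1 := hT' (u, v) huv σ'
    simp only at h1
    rw [map_mul, map_mul, lift_spow, lift_spow, ← h1, hmul_spow]
  have hcont : cont (u * spow v n) = cont (spow u n * v) := by
    rw [cont_mul, cont_mul, cont_spow, cont_spow]
  have h := hY _ _ hmem hcont
  have := congrArg (fun t : T => (t : WithOne T)) h
  simp only [map_mul, lift_spow, WithOne.coe_mul, coe_spow] at this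
  exact this

/-- P4 : the padding rule in the case `cont v ⊆ cont u`. -/
theorem fact_P4 (hYc : eqTh Y = Y) (huv : (u, v) ∈ Y) (hsub : cont v ⊆ cont u)
    (σ : ℕ → T)
    (hY : ∀ p q : Word, (p, q) ∈ Y → cont p = cont q →
      FreeSemigroup.lift σ p = FreeSemigroup.lift σ q) (s : ℕ) :
    ((FreeSemigroup.lift σ u : T) : WithOne T) ^ (s + 2)
      = ((FreeSemigroup.lift σ v : T) : WithOne T)
        * ((FreeSemigroup.lift σ u : T) : WithOne T) ^ (s + 1) := by
  have hmem : (spow u (s + 1), v * spow u s) ∈ Y := by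
    rw [← hYc]
    intro T' _ hT' σ'
    have h1 := hT' (u, v) huv σ'
    simp only at h1
    rw [map_mul, lift_spow, lift_spow, ← h1]
    rfl
  have hcont : cont (spow u (s + 1)) = cont (v * spow u s) := by
    rw [cont_spow, cont_mul, cont_spow]
    exact (Finset.union_eq_right.2 hsub).symm
  have h := hY _ _ hmem hcont
  have := congrArg (fun t : T => (t : WithOne T)) h
  simp only [map_mul, lift_spow, WithOne.coe_mul, coe_spow] at this
  exact this

/-- P3 : in the case `cont v ⊆ cont u`, substituting any word over `cont v`
for the extra letters of `u` evaluates `v`. -/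
theorem fact_P3 (hYc : eqTh Y = Y) (huv : (u, v) ∈ Y) (hsub : cont v ⊆ cont u)
    (hcomm : ∀ x y : T, x * y = y * x) (σ : ℕ → T)
    (hY : ∀ p q : Word, (p, q) ∈ Y → cont p = cont q →
      FreeSemigroup.lift σ p = FreeSemigroup.lift σ q)
    (g : Word) (hg : cont g ⊆ cont v) :
    ((FreeSemigroup.lift σ v : T) : WithOne T)
      = (((wl u).filter (fun x => decide (x ∈ cont v))).map
            (fun l => ((σ l : T) : WithOne T))).prod
        * ((FreeSemigroup.lift σ g : T) : WithOne T)
            ^ ((wl u).countP (fun x => ! decide (x ∈ cont v))) := by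
  classical
  letI : CommSemigroup T := { mul_comm := hcomm }
  set θ : ℕ → Word := fun l => if l ∈ cont v then FreeSemigroup.of l else g with hθ
  have hsubv : sub θ v = v := by
    apply sub_eq_self
    intro l hl
    simp [hθ, hl]
  have hmemY : (sub θ u, v) ∈ Y := by
    have h1 : (sub θ u, sub θ v) ∈ eqTh Y := eqTh_subst θ (by rw [hYc]; exact huv)
    rw [hsubv] at h1
    rw [← hYc]
    exact h1
  have hcont : cont (sub θ u) = cont v := by
    apply Finset.Subset.antisymm
    · apply cont_sub_of_subset
      intro l _
      by_cases hl : l ∈ cont v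
      · rw [hθ]
        simp only [if_pos hl, cont_of]
        intro a ha
        rw [Finset.mem_singleton] at ha
        subst ha
        exact hl
      · rw [hθ]
        simp only [if_neg hl]
        exact hg
    · intro l hl
      exact mem_cont_sub.2 ⟨l, hsub hl, by simp [hθ, hl, cont_of]⟩
  have hval : FreeSemigroup.lift σ (sub θ u) = FreeSemigroup.lift σ v :=
    hY _ _ hmemY hcont
  have hv2 : ((FreeSemigroup.lift σ (sub θ u) : T) : WithOne T)
      = (((wl u).filter (fun x => decide (x ∈ cont v))).map
            (fun l => ((σ l : T) : WithOne T))).prod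
        * ((FreeSemigroup.lift σ g : T) : WithOne T)
            ^ ((wl u).countP (fun x => ! decide (x ∈ cont v))) := by
    rw [lift_sub, lift_eq_prod]
    have hpt : ∀ l ∈ wl u, ((FreeSemigroup.lift σ (θ l) : T) : WithOne T)
        = (fun x => if (fun y => decide (y ∈ cont v)) x
            then ((σ x : T) : WithOne T)
            else ((FreeSemigroup.lift σ g : T) : WithOne T)) l := by
      intro l _
      by_cases hl : l ∈ cont v
      · rw [hθ]
        simp [hl]
      · rw [hθ]
        simp [hl]
    rw [List.map_congr_left hpt, prod_map_ite_bool]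
  rw [← hval, hv2]

end Facts

/-! #### The single-identity core lemma -/

section SinglePair

variable {X Y : Set SgId}

theorem single_pair_beta (hXc : eqTh X = X) (hYc : eqTh Y = Y) (hcmX : commId ∈ X)
    {u₀ v₀ : Word} (hm0 : (u₀, v₀) ∈ X) {k₀ : ℕ} (hk0 : k₀ ∈ cont u₀) (hk0' : k₀ ∉ cont v₀)
    {u v : Word} (huv : (u, v) ∈ Y) (hsub : cont v ⊆ cont u) (hne : cont u ≠ cont v) :
    (u, v) ∈ eqTh (X ∪ (Y ∩ SEqC)) := by
  classical
  obtain ⟨k, hku, hkv⟩ : ∃ k, k ∈ cont u ∧ k ∉ cont v := by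
    by_contra hcon
    push_neg at hcon
    exact hne (Finset.Subset.antisymm (fun a ha => hcon a ha) hsub)
  intro T _ hT σ
  have hTX : Models T X := fun e he => hT e (Or.inl he)
  have hY : ∀ p q : Word, (p, q) ∈ Y → cont p = cont q →
      FreeSemigroup.lift σ p = FreeSemigroup.lift σ q :=
    fun p q h1 h2 => hT (p, q) (Or.inr ⟨h1, h2⟩) σ
  have hcomm := comm_of_sat (hTX commId hcmX)
  letI : CommSemigroup T := { mul_comm := hcomm }
  obtain ⟨aa, Q₀, haa1, hQ₀1, hlawAll⟩ := law_of_unequal hcmX hm0 hk0 hk0'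
  have hiter := law_iterT (hlawAll T hTX)
  show FreeSemigroup.lift σ u = FreeSemigroup.lift σ v
  apply WithOne.coe_inj.1
  set U : WithOne T := ((FreeSemigroup.lift σ u : T) : WithOne T) with hU
  set V : WithOne T := ((FreeSemigroup.lift σ v : T) : WithOne T) with hV
  set e := (wl u).count k with he
  have he1 : 1 ≤ e := by
    rw [he, Nat.one_le_iff_ne_zero, ← Nat.pos_iff_ne_zero, List.count_pos_iff]
    exact mem_cont.1 hku
  set E₂ := aa * (Q₀ + 1) * e with hE₂
  have hE₂1 : Q₀ + 1 ≤ E₂ := by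
    rw [hE₂]
    calc Q₀ + 1 ≤ (Q₀ + 1) * e := Nat.le_mul_of_pos_right _ he1
      _ ≤ aa * ((Q₀ + 1) * e) := Nat.le_mul_of_pos_left _ haa1
      _ = aa * (Q₀ + 1) * e := by ring
  -- step 1 : U = U * U ^ E₂
  have h1 : U = U * U ^ E₂ := by
    have hp1 := fact_P1 hYc huv hku hkv hcomm σ hY u (fun a ha => ha) (aa * (Q₀ + 1) - 1)
    rw [show aa * (Q₀ + 1) - 1 + 1 = aa * (Q₀ + 1) from by
        have : 1 ≤ aa * (Q₀ + 1) := Nat.one_le_iff_ne_zero.2 (by positivity)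
        omega] at hp1
    rw [← hU] at hp1
    exact hp1
  -- step 2 : U = V * U ^ E₂
  have h2 : U = V * U ^ E₂ := by
    have hp4 := fact_P4 hYc huv hsub σ hY (E₂ - 1)
    rw [show E₂ - 1 + 2 = E₂ + 1 from by omega, show E₂ - 1 + 1 = E₂ from by omega] at hp4
    rw [← hU, ← hV] at hp4
    calc U = U * U ^ E₂ := h1
      _ = U ^ (E₂ + 1) := by rw [← pow_succ']
      _ = V * U ^ E₂ := hp4
  -- step 3 : V = C0 * V ^ R
  set E₁ := (wl u).countP (fun x => ! decide (x ∈ cont v)) with hE₁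
  have hE₁1 : 1 ≤ E₁ := by
    rw [hE₁, Nat.one_le_iff_ne_zero, ← Nat.pos_iff_ne_zero, List.countP_pos_iff]
    exact ⟨k, mem_cont.1 hku, by simp [hkv]⟩
  set C0 : WithOne T := (((wl u).filter (fun x => decide (x ∈ cont v))).map
      (fun l => ((σ l : T) : WithOne T))).prod with hC0
  set R := (Q₀ + 1) * E₁ with hR
  have hRQ : Q₀ ≤ R := by
    rw [hR]
    calc Q₀ ≤ Q₀ + 1 := by omega
      _ ≤ (Q₀ + 1) * E₁ := Nat.le_mul_of_pos_right _ hE₁1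
  have h3 : V = C0 * V ^ R := by
    have hp3 := fact_P3 hYc huv hsub hcomm σ hY (spow v Q₀) (by rw [cont_spow])
    rw [lift_spow, coe_spow, ← pow_mul] at hp3
    rw [← hV, ← hC0, ← hE₁, ← hR] at hp3
    exact hp3
  -- step 4 : V * U ^ E₂ = V
  have habs : V ^ R * U ^ E₂ = V ^ R := by
    rw [mul_comm]
    have := hiter (FreeSemigroup.lift σ u) (FreeSemigroup.lift σ v) ((Q₀ + 1) * e) R hRQ
    rw [show aa * ((Q₀ + 1) * e) = E₂ from by rw [hE₂]; ring, ← hU, ← hV] at this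
    exact this
  have h4 : V * U ^ E₂ = V := by
    conv_lhs => rw [h3]
    rw [mul_assoc, habs, ← h3]
  -- conclusion
  conv_lhs => rw [h2]
  exact h4

theorem single_pair_alpha (hXc : eqTh X = X) (hYc : eqTh Y = Y) (hcmX : commId ∈ X)
    {u₀ v₀ : Word} (hm0 : (u₀, v₀) ∈ X) {k₀ : ℕ} (hk0 : k₀ ∈ cont u₀) (hk0' : k₀ ∉ cont v₀)
    (hcmY : commId ∈ Y) {u v : Word} (huv : (u, v) ∈ Y)
    {k k' : ℕ} (hku : k ∈ cont u) (hkv : k ∉ cont v)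
    (hk'v : k' ∈ cont v) (hk'u : k' ∉ cont u) :
    (u, v) ∈ eqTh (X ∪ (Y ∩ SEqC)) := by
  classical
  have hvu : (v, u) ∈ Y := by
    rw [← hYc]
    exact eqTh_symm (by rw [hYc]; exact huv)
  intro T _ hT σ
  have hTX : Models T X := fun e he => hT e (Or.inl he)
  have hY : ∀ p q : Word, (p, q) ∈ Y → cont p = cont q →
      FreeSemigroup.lift σ p = FreeSemigroup.lift σ q :=
    fun p q h1 h2 => hT (p, q) (Or.inr ⟨h1, h2⟩) σ
  have hcomm := comm_of_sat (hTX commId hcmX)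
  letI : CommSemigroup T := { mul_comm := hcomm }
  obtain ⟨aa, Q₀, haa1, hQ₀1, hlawAll⟩ := law_of_unequal hcmX hm0 hk0 hk0'
  have hiter := law_iterT (hlawAll T hTX)
  show FreeSemigroup.lift σ u = FreeSemigroup.lift σ v
  apply WithOne.coe_inj.1
  set U : WithOne T := ((FreeSemigroup.lift σ u : T) : WithOne T) with hU
  set V : WithOne T := ((FreeSemigroup.lift σ v : T) : WithOne T) with hV
  set e := (wl u).count k with he
  have he1 : 1 ≤ e := by
    rw [he, Nat.one_le_iff_ne_zero, ← Nat.pos_iff_ne_zero, List.count_pos_iff]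
    exact mem_cont.1 hku
  set f := (wl v).count k' with hf
  have hf1 : 1 ≤ f := by
    rw [hf, Nat.one_le_iff_ne_zero, ← Nat.pos_iff_ne_zero, List.count_pos_iff]
    exact mem_cont.1 hk'v
  set N := aa * (Q₀ + 1) * e * f with hN
  have hNQ : Q₀ ≤ N := by
    have h1 : Q₀ + 1 ≤ aa * (Q₀ + 1) := Nat.le_mul_of_pos_left _ haa1
    have h2 : aa * (Q₀ + 1) ≤ aa * (Q₀ + 1) * e := Nat.le_mul_of_pos_right _ he1
    have h3 : aa * (Q₀ + 1) * e ≤ aa * (Q₀ + 1) * e * f := Nat.le_mul_of_pos_right _ hf1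
    omega
  have hN1 : 1 ≤ N := by omega
  -- U absorbs U ^ N, V absorbs V ^ N
  have h1 : U = U * U ^ N := by
    have hp1 := fact_P1 hYc huv hku hkv hcomm σ hY u (fun a ha => ha) (aa * (Q₀ + 1) * f - 1)
    rw [show (aa * (Q₀ + 1) * f - 1 + 1) * e = N from by
        have : 1 ≤ aa * (Q₀ + 1) * f := by
          have := Nat.mul_le_mul (Nat.mul_le_mul haa1 (by omega : 1 ≤ Q₀ + 1)) hf1
          omega
        rw [hN]
        have h5 : aa * (Q₀ + 1) * f - 1 + 1 = aa * (Q₀ + 1) * f := by omega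
        rw [h5]; ring] at hp1
    rw [← hU] at hp1
    exact hp1
  have h1' : V = V * V ^ N := by
    have hp1 := fact_P1 hYc hvu hk'v hk'u hcomm σ hY v (fun a ha => ha) (aa * (Q₀ + 1) * e - 1)
    rw [show (aa * (Q₀ + 1) * e - 1 + 1) * f = N from by
        have : 1 ≤ aa * (Q₀ + 1) * e := by
          have := Nat.mul_le_mul (Nat.mul_le_mul haa1 (by omega : 1 ≤ Q₀ + 1)) he1
          omega
        rw [hN]
        have h5 : aa * (Q₀ + 1) * e - 1 + 1 = aa * (Q₀ + 1) * e := by omega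
        rw [h5]] at hp1
    rw [← hV] at hp1
    exact hp1
  -- U ^ N = V ^ N
  have h3 : U ^ N = V ^ N := by
    have hUabs : V ^ N * U ^ N = U ^ N := by
      have := hiter (FreeSemigroup.lift σ v) (FreeSemigroup.lift σ u) ((Q₀ + 1) * e * f) N hNQ
      rw [show aa * ((Q₀ + 1) * e * f) = N from by rw [hN]; ring, ← hU, ← hV] at this
      exact this
    have hVabs : U ^ N * V ^ N = V ^ N := by
      have := hiter (FreeSemigroup.lift σ u) (FreeSemigroup.lift σ v) ((Q₀ + 1) * e * f) N hNQ
      rw [show aa * ((Q₀ + 1) * e * f) = N from by rw [hN]; ring, ← hU, ← hV] at this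
      exact this
    calc U ^ N = V ^ N * U ^ N := hUabs.symm
      _ = U ^ N * V ^ N := mul_comm _ _
      _ = V ^ N := hVabs
  -- the swap step
  have hswap : U * V ^ N = U ^ N * V := by
    have hp2 := fact_P2 hYc huv hcmY σ hY (N - 1)
    rw [show N - 1 + 1 = N from by omega, ← hU, ← hV] at hp2
    exact hp2
  calc U = U * U ^ N := h1
    _ = U * V ^ N := by rw [h3]
    _ = U ^ N * V := hswap
    _ = V ^ N * V := by rw [h3]
    _ = V ^ (N + 1) := by rw [← pow_succ]
    _ = V := by
        conv_rhs => rw [h1']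
        rw [pow_succ']

/-- Any content-unequal identity of `Y` follows from `X` together with the
equal-content part of `Y`, provided `X` has a content-unequal identity. -/
theorem single_pair (hXc : eqTh X = X) (hYc : eqTh Y = Y) (hcmX : commId ∈ X)
    {u₀ v₀ : Word} (hm0 : (u₀, v₀) ∈ X) {k₀ : ℕ} (hk0 : k₀ ∈ cont u₀) (hk0' : k₀ ∉ cont v₀)
    (hcmY : commId ∈ Y) {u v : Word} (huv : (u, v) ∈ Y) (hne : cont u ≠ cont v) :
    (u, v) ∈ eqTh (X ∪ (Y ∩ SEqC)) := by
  by_cases h1 : cont v ⊆ cont u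
  · exact single_pair_beta hXc hYc hcmX hm0 hk0 hk0' huv h1 hne
  · by_cases h2 : cont u ⊆ cont v
    · have hvu : (v, u) ∈ Y := by
        rw [← hYc]
        exact eqTh_symm (by rw [hYc]; exact huv)
      exact eqTh_symm (single_pair_beta hXc hYc hcmX hm0 hk0 hk0' hvu h2 (Ne.symm hne))
    · obtain ⟨k, hku, hkv⟩ := Finset.not_subset.1 h2
      obtain ⟨k', hk'v, hk'u⟩ := Finset.not_subset.1 h1
      exact single_pair_alpha hXc hYc hcmX hm0 hk0 hk0' hcmY huv hku hkv hk'v hk'u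

end SinglePair

/-! #### Fact A : meeting with a join with SL, non-semilattice case -/

theorem factA_incl {X Y : Set SgId} (hXc : eqTh X = X) (hYc : eqTh Y = Y)
    (hcmX : commId ∈ X) (hcmY : commId ∈ Y)
    {u₀ v₀ : Word} (hm0 : (u₀, v₀) ∈ X) {k₀ : ℕ} (hk0 : k₀ ∈ cont u₀) (hk0' : k₀ ∉ cont v₀) :
    eqTh (X ∪ Y) ⊆ eqTh (X ∪ (Y ∩ SEqC)) := by
  intro e he
  have hchain := ded_to_rtg hXc hYc (complete he)
  have main : ∀ p q : Word, Relation.ReflTransGen (StepRel X Y) p q →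
      (p, q) ∈ eqTh (X ∪ (Y ∩ SEqC)) := by
    intro p q h
    induction h with
    | refl => exact eqTh_refl _ _
    | @tail b c' hab hbc ih =>
        refine eqTh_trans ih ?_
        rcases hbc with hA | hYp
        · exact subset_eqTh _ (Or.inl hA)
        · by_cases hc : cont b = cont c'
          · exact subset_eqTh _ (Or.inr ⟨hYp, hc⟩)
          · exact single_pair hXc hYc hcmX hm0 hk0 hk0' hcmY hYp hc
  obtain ⟨p, q⟩ := e
  exact main p q hchain

/-! #### Lemma M : modularity-type chain surgery -/

/-- Boundary absorption: if `(w, w')` lies in the closed theory `A` and the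
letter `k` occurs in `w` but not in `w'`, then `w` absorbs powers of any word
over its content, modulo `(A ∩ SEqC) ∪ C`. -/
theorem boundary_pair {A C : Set SgId} (hAc : eqTh A = A) (hcmC : commId ∈ C)
    {w w' : Word} (hA : (w, w') ∈ A) {k : ℕ} (hk : k ∈ cont w) (hk' : k ∉ cont w')
    (m : Word) (hmγ : cont m ⊆ cont w) (j : ℕ) :
    (w, w * spow m ((j + 1) * (wl w).count k - 1)) ∈ eqTh ((A ∩ SEqC) ∪ C) := by
  classical
  have he1 : 1 ≤ (wl w).count k := by
    rw [Nat.one_le_iff_ne_zero, ← Nat.pos_iff_ne_zero, List.count_pos_iff]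
    exact mem_cont.1 hk
  set θ : ℕ → Word :=
    fun l => if l = k then FreeSemigroup.of k * spow m j else FreeSemigroup.of l with hθ
  have hsubw' : sub θ w' = w' := by
    apply sub_eq_self
    intro l hl
    have hlk : l ≠ k := fun h => hk' (h ▸ hl)
    simp [hθ, hlk]
  have hmemA : (w, sub θ w) ∈ A := by
    have h1 : (sub θ w, sub θ w') ∈ eqTh A := eqTh_subst θ (by rw [hAc]; exact hA)
    rw [hsubw'] at h1
    have h2 : (w, sub θ w) ∈ eqTh A :=
      eqTh_trans (by rw [hAc]; exact hA) (eqTh_symm h1)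
    rw [hAc] at h2
    exact h2
  have hcont : cont (sub θ w) = cont w := by
    apply Finset.Subset.antisymm
    · apply cont_sub_of_subset
      intro l hl
      by_cases hlk : l = k
      · rw [hθ]
        simp only [if_pos hlk, cont_mul, cont_spow, cont_of]
        intro a ha
        rcases Finset.mem_union.1 ha with ha | ha
        · rw [Finset.mem_singleton] at ha
          subst ha
          exact hk
        · exact hmγ ha
      · rw [hθ]
        simp only [if_neg hlk, cont_of]
        intro a ha
        rw [Finset.mem_singleton] at ha
        subst ha
        exact hl
    · intro l hl
      apply mem_cont_sub.2 ⟨l, hl, ?_⟩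
      by_cases hlk : l = k
      · simp [hθ, if_pos hlk, cont_mul, cont_of, hlk]
      · simp [hθ, hlk, cont_of]
  have hstep1 : (w, sub θ w) ∈ eqTh ((A ∩ SEqC) ∪ C) :=
    subset_eqTh _ (Or.inl ⟨hmemA, hcont.symm⟩)
  have hstep2 : (sub θ w, w * spow m ((j + 1) * (wl w).count k - 1))
      ∈ eqTh ((A ∩ SEqC) ∪ C) := by
    intro T _ hT σ
    have hcomm := comm_of_sat (hT commId (Or.inr hcmC))
    letI : CommSemigroup T := { mul_comm := hcomm }
    apply WithOne.coe_inj.1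
    have hv2 : ((FreeSemigroup.lift σ (sub θ w) : T) : WithOne T)
        = ((FreeSemigroup.lift σ w : T) : WithOne T)
          * ((FreeSemigroup.lift σ m : T) : WithOne T) ^ ((j + 1) * (wl w).count k) := by
      rw [lift_sub, lift_eq_prod]
      have hpt : ∀ l ∈ wl w, ((FreeSemigroup.lift σ (θ l) : T) : WithOne T)
          = (fun x => if x = k
              then ((σ x : T) : WithOne T)
                * ((FreeSemigroup.lift σ m : T) : WithOne T) ^ (j + 1)
              else ((σ x : T) : WithOne T)) l := by
        intro l _
        by_cases hlk : l = k
        · have h1 : θ l = FreeSemigroup.of k * spow m j := by rw [hθ]; simp [hlk]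
          rw [h1, hlk]
          simp [map_mul, lift_spow, coe_spow]
        · have h2 : θ l = FreeSemigroup.of l := by rw [hθ]; simp [hlk]
          rw [h2]
          simp [hlk]
      rw [List.map_congr_left hpt, prod_map_update_mul, ← pow_mul, ← lift_eq_prod]
    have hv3 : ((FreeSemigroup.lift σ (w * spow m ((j + 1) * (wl w).count k - 1)) : T)
          : WithOne T)
        = ((FreeSemigroup.lift σ w : T) : WithOne T)
          * ((FreeSemigroup.lift σ m : T) : WithOne T) ^ ((j + 1) * (wl w).count k) := by
      rw [map_mul, WithOne.coe_mul, lift_spow, coe_spow,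
        show (j + 1) * (wl w).count k - 1 + 1 = (j + 1) * (wl w).count k from by
          have : 1 ≤ (j + 1) * (wl w).count k := by
            calc 1 ≤ (wl w).count k := he1
              _ ≤ (j + 1) * (wl w).count k := Nat.le_mul_of_pos_left _ (by omega)
          omega]
    rw [hv2, hv3]
  exact eqTh_trans hstep1 hstep2

/-- Padding a whole chain. -/
theorem padded_chain {A C : Set SgId} (hAc : eqTh A = A) (hCc : eqTh C = C)
    {γ : Finset ℕ} {mw : Word} (hmw : cont mw = γ) :
    ∀ (n : ℕ) (c : ℕ → Word), (∀ i < n, StepRel A C (c i) (c (i + 1))) →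
      (∀ i ≤ n, cont (c i) ⊆ γ) →
      (c 0 * mw, c n * mw) ∈ eqTh ((A ∩ SEqC) ∪ C) := by
  intro n
  induction n with
  | zero => intro c _ _; exact eqTh_refl _ _
  | succ n ih =>
      intro c hsteps hconts
      refine eqTh_trans (ih c (fun i hi => hsteps i (by omega))
        (fun i hi => hconts i (by omega))) ?_
      have hcc : ∀ i ≤ n + 1, cont (c i * mw) = γ := by
        intro i hi
        rw [cont_mul, hmw]
        exact Finset.union_eq_right.2 (hconts i hi)
      rcases hsteps n (by omega) with hA | hC
      · refine subset_eqTh _ (Or.inl ⟨?_, ?_⟩)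
        · rw [← hAc]
          exact eqTh_mulr mw (by rw [hAc]; exact hA)
        · show cont (c n * mw) = cont (c (n + 1) * mw)
          rw [hcc n (by omega), hcc (n + 1) (by omega)]
      · refine subset_eqTh _ (Or.inr ?_)
        rw [← hCc]
        exact eqTh_mulr mw (by rw [hCc]; exact hC)

/-- The main chain lemma for Lemma M. -/
theorem chain_full_content {A C : Set SgId} (hAc : eqTh A = A) (hCc : eqTh C = C)
    (hcmC : commId ∈ C) (hCS : C ⊆ SEqC) {γ : Finset ℕ} {mw : Word} (hmw : cont mw = γ) :
    ∀ (n : ℕ) (c : ℕ → Word), (∀ i < n, StepRel A C (c i) (c (i + 1))) →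
      (∀ i ≤ n, cont (c i) ⊆ γ) → cont (c 0) = γ → cont (c n) = γ →
      (c 0, c n) ∈ eqTh ((A ∩ SEqC) ∪ C) := by
  intro n
  induction n using Nat.strong_induction_on with
  | _ n ih =>
    intro c hsteps hconts h0 hn
    rcases Nat.eq_zero_or_pos n with rfl | hnpos
    · exact eqTh_refl _ _
    rcases Nat.lt_or_ge n 2 with hn1 | hn2
    · -- n = 1
      have hn1' : n = 1 := by omega
      subst hn1'
      rcases hsteps 0 (by omega) with hA | hC
      · exact subset_eqTh _ (Or.inl ⟨hA, by show cont (c 0) = cont (c 1); rw [h0, hn]⟩)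
      · exact subset_eqTh _ (Or.inr hC)
    by_cases hsplit : ∃ t, 0 < t ∧ t < n ∧ cont (c t) = γ
    · obtain ⟨t, ht0, htn, hct⟩ := hsplit
      have hleft : (c 0, c t) ∈ eqTh ((A ∩ SEqC) ∪ C) :=
        ih t (by omega) c (fun i hi => hsteps i (by omega))
          (fun i hi => hconts i (by omega)) h0 hct
      have hright : (c t, c n) ∈ eqTh ((A ∩ SEqC) ∪ C) := by
        have h9 := ih (n - t) (by omega) (fun i => c (t + i))
          (fun i hi => hsteps (t + i) (by omega))
          (fun i hi => hconts (t + i) (by omega))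
          (by show cont (c (t + 0)) = γ; rw [Nat.add_zero]; exact hct)
          (by show cont (c (t + (n - t))) = γ
              rw [show t + (n - t) = n from by omega]
              exact hn)
        have h10 : (c (t + 0), c (t + (n - t))) ∈ eqTh ((A ∩ SEqC) ∪ C) := h9
        rw [Nat.add_zero, show t + (n - t) = n from by omega] at h10
        exact h10
      exact eqTh_trans hleft hright
    · push_neg at hsplit
      -- first and last steps are content-changing A-steps
      have hfirst : (c 0, c 1) ∈ A ∧ cont (c 1) ≠ γ := by
        have hne1 : cont (c 1) ≠ γ := hsplit 1 (by omega) (by omega)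
        rcases hsteps 0 (by omega) with hA | hC
        · exact ⟨hA, hne1⟩
        · exact absurd (by rw [← h0]; exact (hCS hC).symm) hne1
      have hlast : (c n, c (n - 1)) ∈ A ∧ cont (c (n - 1)) ≠ γ := by
        have hne1 : cont (c (n - 1)) ≠ γ := hsplit (n - 1) (by omega) (by omega)
        have hstep := hsteps (n - 1) (by omega)
        rw [show n - 1 + 1 = n from by omega] at hstep
        rcases hstep with hA | hC
        · refine ⟨?_, hne1⟩
          rw [← hAc]
          exact eqTh_symm (by rw [hAc]; exact hA)
        · exact absurd (by rw [← hn]; exact (hCS hC)) hne1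
      obtain ⟨k, hkγ, hk1⟩ : ∃ k, k ∈ γ ∧ k ∉ cont (c 1) := by
        have hss : cont (c 1) ⊂ γ := lt_of_le_of_ne (hconts 1 (by omega)) hfirst.2
        obtain ⟨k, hk⟩ := Finset.exists_of_ssubset hss
        exact ⟨k, hk.1, hk.2⟩
      obtain ⟨k', hk'γ, hk'1⟩ : ∃ k', k' ∈ γ ∧ k' ∉ cont (c (n - 1)) := by
        have hss : cont (c (n - 1)) ⊂ γ := lt_of_le_of_ne (hconts (n - 1) (by omega)) hlast.2
        obtain ⟨k', hk'⟩ := Finset.exists_of_ssubset hss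
        exact ⟨k', hk'.1, hk'.2⟩
      set e := (wl (c 0)).count k with he
      set f := (wl (c n)).count k' with hf
      have he1 : 1 ≤ e := by
        rw [he, Nat.one_le_iff_ne_zero, ← Nat.pos_iff_ne_zero, List.count_pos_iff]
        exact mem_cont.1 (h0 ▸ hkγ)
      have hf1 : 1 ≤ f := by
        rw [hf, Nat.one_le_iff_ne_zero, ← Nat.pos_iff_ne_zero, List.count_pos_iff]
        exact mem_cont.1 (hn ▸ hk'γ)
      -- boundary absorptions
      have hbp : (c 0, c 0 * spow mw (f * e - 1)) ∈ eqTh ((A ∩ SEqC) ∪ C) := by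
        have := boundary_pair hAc hcmC hfirst.1 (h0 ▸ hkγ) hk1 mw (by rw [h0, hmw]) (f - 1)
        rw [show (f - 1 + 1) * (wl (c 0)).count k = f * e from by
          rw [← he, show f - 1 + 1 = f from by omega]] at this
        exact this
      have hbq : (c n, c n * spow mw (f * e - 1)) ∈ eqTh ((A ∩ SEqC) ∪ C) := by
        have := boundary_pair hAc hcmC hlast.1 (hn ▸ hk'γ) hk'1 mw (by rw [hn, hmw]) (e - 1)
        rw [show (e - 1 + 1) * (wl (c n)).count k' = f * e from by
          rw [← hf, show e - 1 + 1 = e from by omega]; ring] at this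
        exact this
      -- padded chain with pad `spow mw (f*e - 1)`
      have hpad : (c 0 * spow mw (f * e - 1), c n * spow mw (f * e - 1))
          ∈ eqTh ((A ∩ SEqC) ∪ C) := by
        have hcmw : cont (spow mw (f * e - 1)) = γ := by rw [cont_spow, hmw]
        exact padded_chain hAc hCc hcmw n c hsteps hconts
      exact eqTh_trans hbp (eqTh_trans hpad (eqTh_symm hbq))

/-- Lemma M. -/
theorem lemmaM {A C : Set SgId} (hAc : eqTh A = A) (hCc : eqTh C = C)
    (hcmC : commId ∈ C) (hCS : C ⊆ SEqC) {p q : Word}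
    (hpq : (p, q) ∈ eqTh (A ∪ C)) (hcont : cont p = cont q) :
    (p, q) ∈ eqTh ((A ∩ SEqC) ∪ C) := by
  classical
  obtain ⟨n, c, h0, hn, hsteps⟩ := rtg_to_chain (ded_to_rtg hAc hCc (complete hpq))
  -- collapse letters outside the content of p
  set ψ : ℕ → Word :=
    fun l => if l ∈ cont p then FreeSemigroup.of l else FreeSemigroup.of p.head with hψ
  have hψsub : ∀ w : Word, cont (sub ψ w) ⊆ cont p := by
    intro w
    apply cont_sub_of_subset
    intro l _
    by_cases hl : l ∈ cont p
    · rw [hψ]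
      simp only [if_pos hl, cont_of]
      intro a ha
      rw [Finset.mem_singleton] at ha
      subst ha
      exact hl
    · rw [hψ]
      simp only [if_neg hl, cont_of]
      intro a ha
      rw [Finset.mem_singleton] at ha
      subst ha
      exact mem_cont.2 (by simp [wl])
  have hψp : sub ψ p = p := by
    apply sub_eq_self
    intro l hl
    simp [hψ, hl]
  have hψq : sub ψ q = q := by
    apply sub_eq_self
    intro l hl
    simp [hψ, hcont ▸ hl]
  have hsteps' : ∀ i < n, StepRel A C (sub ψ (c i)) (sub ψ (c (i + 1))) := by
    intro i hi
    rcases hsteps i hi with hA | hC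
    · exact Or.inl (by rw [← hAc]; exact eqTh_subst ψ (by rw [hAc]; exact hA))
    · exact Or.inr (by rw [← hCc]; exact eqTh_subst ψ (by rw [hCc]; exact hC))
  have hmain := chain_full_content hAc hCc hcmC hCS (γ := cont p) (mw := p) rfl n
    (fun i => sub ψ (c i)) hsteps' (fun i _ => hψsub (c i))
    (by show cont (sub ψ (c 0)) = cont p; rw [h0, hψp])
    (by show cont (sub ψ (c n)) = cont p; rw [hn, hψq, hcont])
  have hmain2 : (sub ψ (c 0), sub ψ (c n)) ∈ eqTh ((A ∩ SEqC) ∪ C) := hmain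
  rw [h0, hn, hψp, hψq] at hmain2
  exact hmain2

/-! #### The abstract lattice argument -/

theorem lattice_main {L : Type*} [Lattice L] (s bot : L)
    (hbot : ∀ x : L, bot ≤ x) (hsne : s ≠ bot)
    (hatom : ∀ x : L, s ⊓ x = bot ∨ s ≤ x)
    (hprime : ∀ x y : L, s ≤ x ⊔ y → s ≤ x ∨ s ≤ y)
    (hA : ∀ x y : L, ¬ s ≤ x → x ⊓ (y ⊔ s) = x ⊓ y)
    (hM : ∀ x y : L, s ≤ y → (x ⊔ s) ⊓ y = (x ⊓ y) ⊔ s)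
    (a : L) :
    (IsUpperModular a ↔ IsUpperModular (a ⊔ s)) ∧
    (IsCostandard a ↔ IsCostandard (a ⊔ s)) := by
  have hP3 : ∀ x y : L, x ⊓ (y ⊔ s) = (x ⊓ y) ⊔ (x ⊓ s) := by
    intro x y
    rcases hatom x with hx | hx
    · have hnsx : ¬ s ≤ x := by
        intro h
        exact hsne (by rw [← hx, inf_eq_left.2 h])
      rw [hA x y hnsx, show x ⊓ s = bot from by rw [inf_comm]; exact hx,
        sup_eq_left.2 (hbot _)]
    · rw [inf_comm x (y ⊔ s), hM y x hx, inf_comm y x,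
        show x ⊓ s = s from inf_eq_right.2 hx]
  constructor
  · -- upper-modularity
    constructor
    · -- main1
      intro ha b c hb
      apply le_antisymm
      · calc (a ⊔ s) ⊓ (b ⊔ c)
            = (b ⊔ c) ⊓ (a ⊔ s) := inf_comm _ _
          _ = ((b ⊔ c) ⊓ a) ⊔ ((b ⊔ c) ⊓ s) := hP3 _ _
          _ ≤ b ⊔ ((a ⊔ s) ⊓ c) := by
              apply sup_le
              · -- term 1
                have hbd : b = (b ⊓ a) ⊔ (b ⊓ s) := by
                  conv_lhs => rw [show b = b ⊓ (a ⊔ s) from (inf_eq_left.2 hb).symm, hP3 b a]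
                rcases hatom b with hbs | hbs
                · have hba : b ≤ a := by
                    have h1 : b ⊓ s = bot := by rw [inf_comm]; exact hbs
                    rw [h1, sup_eq_left.2 (hbot _)] at hbd
                    rw [hbd]
                    exact inf_le_right
                  calc (b ⊔ c) ⊓ a = a ⊓ (b ⊔ c) := inf_comm _ _
                    _ = b ⊔ (a ⊓ c) := ha b c hba
                    _ ≤ b ⊔ ((a ⊔ s) ⊓ c) :=
                        sup_le_sup_left (inf_le_inf_right c le_sup_left) b
                · have h1 : b ⊓ s = s := inf_eq_right.2 hbs
                  rw [h1] at hbd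
                  have hkey : a ⊓ (b ⊔ c) = (b ⊓ a) ⊔ ((a ⊓ c) ⊔ (a ⊓ s)) := by
                    conv_lhs => rw [hbd]
                    rw [show ((b ⊓ a) ⊔ s) ⊔ c = (b ⊓ a) ⊔ (c ⊔ s) from by
                      rw [sup_assoc, sup_comm s c],
                      ha (b ⊓ a) (c ⊔ s) inf_le_right, hP3 a c]
                  calc (b ⊔ c) ⊓ a = a ⊓ (b ⊔ c) := inf_comm _ _
                    _ = (b ⊓ a) ⊔ ((a ⊓ c) ⊔ (a ⊓ s)) := hkey
                    _ ≤ b ⊔ ((a ⊔ s) ⊓ c) := by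
                        apply sup_le
                        · exact inf_le_left.trans le_sup_left
                        · apply sup_le
                          · exact (inf_le_inf_right c le_sup_left).trans le_sup_right
                          · exact (inf_le_right.trans hbs).trans le_sup_left
              · -- term 2
                rcases hatom (b ⊔ c) with hbc | hbc
                · rw [inf_comm, hbc]
                  exact hbot _
                · rw [inf_eq_right.2 hbc]
                  rcases hprime b c hbc with h | h
                  · exact h.trans le_sup_left
                  · exact (le_inf le_sup_right h).trans le_sup_right
      · exact le_inf (sup_le hb inf_le_left)
          (sup_le le_sup_left (inf_le_right.trans le_sup_right))
    · -- main2
      intro hA' b c hb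
      by_cases hsa : s ≤ a
      · have h := hA' b c (hb.trans le_sup_left)
        rw [sup_eq_left.2 hsa] at h
        exact h
      · apply le_antisymm
        · have h1 : a ⊓ (b ⊔ c) = a ⊓ (b ⊔ ((a ⊔ s) ⊓ c)) := by
            rw [← hA' b c (hb.trans le_sup_left), ← inf_assoc,
              show a ⊓ (a ⊔ s) = a from inf_eq_left.2 le_sup_left]
          have h2 : (a ⊔ s) ⊓ c = (a ⊓ c) ⊔ (c ⊓ s) := by
            rw [inf_comm (a ⊔ s) c, hP3 c a, inf_comm c a]
          rcases hatom c with hc | hc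
          · have h3 : c ⊓ s = bot := by rw [inf_comm]; exact hc
            rw [h1, h2, h3, sup_eq_left.2 (hbot _)]
            exact le_of_eq (inf_eq_right.2 (sup_le hb inf_le_left))
          · have h3 : c ⊓ s = s := inf_eq_right.2 hc
            rw [h1, h2, h3, ← sup_assoc, hA a (b ⊔ (a ⊓ c)) hsa,
              inf_eq_right.2 (sup_le hb inf_le_left)]
        · exact le_inf (sup_le hb inf_le_left)
            (sup_le le_sup_left (inf_le_right.trans le_sup_right))
  · -- costandardness
    constructor
    · -- main3
      intro ha b c
      apply le_antisymm
      · exact sup_le (le_inf (inf_le_left.trans le_sup_left)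
          (inf_le_right.trans le_sup_left)) (le_inf le_sup_right le_sup_right)
      · have h1 : (a ⊔ s) ⊔ c = (a ⊔ c) ⊔ s := by
          rw [sup_assoc, sup_comm s c, sup_assoc]
        calc ((a ⊔ s) ⊔ c) ⊓ (b ⊔ c)
            = (b ⊔ c) ⊓ ((a ⊔ c) ⊔ s) := by rw [h1, inf_comm]
          _ = ((b ⊔ c) ⊓ (a ⊔ c)) ⊔ ((b ⊔ c) ⊓ s) := hP3 _ _
          _ ≤ ((a ⊔ s) ⊓ b) ⊔ c := by
              apply sup_le
              · calc (b ⊔ c) ⊓ (a ⊔ c) = (a ⊔ c) ⊓ (b ⊔ c) := inf_comm _ _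
                  _ = (a ⊓ b) ⊔ c := (ha b c).symm
                  _ ≤ ((a ⊔ s) ⊓ b) ⊔ c :=
                      sup_le_sup_right (inf_le_inf_right b le_sup_left) c
              · rcases hatom (b ⊔ c) with hbc | hbc
                · rw [inf_comm, hbc]
                  exact hbot _
                · rw [inf_eq_right.2 hbc]
                  rcases hprime b c hbc with h | h
                  · exact (le_inf le_sup_right h).trans le_sup_left
                  · exact h.trans le_sup_right
    · -- main4
      intro hA' b c
      by_cases hsa : s ≤ a
      · have h := hA' b c
        rw [sup_eq_left.2 hsa] at h
        exact h
      · apply le_antisymm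
        · exact sup_le (le_inf (inf_le_left.trans le_sup_left)
            (inf_le_right.trans le_sup_left)) (le_inf le_sup_right le_sup_right)
        · have hstep1 : (a ⊔ c) ⊓ (b ⊔ c) ≤ ((a ⊔ s) ⊓ b) ⊔ c := by
            calc (a ⊔ c) ⊓ (b ⊔ c)
                ≤ ((a ⊔ s) ⊔ c) ⊓ (b ⊔ c) :=
                  inf_le_inf_right _ (sup_le_sup_right le_sup_left c)
              _ = ((a ⊔ s) ⊓ b) ⊔ c := (hA' b c).symm
          have h2 : (a ⊔ s) ⊓ b = (a ⊓ b) ⊔ (b ⊓ s) := by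
            rw [inf_comm (a ⊔ s) b, hP3 b a, inf_comm b a]
          rcases hatom b with hb | hb
          · have h3 : b ⊓ s = bot := by rw [inf_comm]; exact hb
            calc (a ⊔ c) ⊓ (b ⊔ c) ≤ ((a ⊔ s) ⊓ b) ⊔ c := hstep1
              _ = (a ⊓ b) ⊔ c := by rw [h2, h3, sup_eq_left.2 (hbot _)]
          · have h3 : b ⊓ s = s := inf_eq_right.2 hb
            have h4 : (a ⊔ c) ⊓ (b ⊔ c) ≤ (a ⊔ c) ⊓ (((a ⊓ b) ⊔ c) ⊔ s) := by
              apply le_inf inf_le_left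
              calc (a ⊔ c) ⊓ (b ⊔ c) ≤ ((a ⊔ s) ⊓ b) ⊔ c := hstep1
                _ = ((a ⊓ b) ⊔ s) ⊔ c := by rw [h2, h3]
                _ = ((a ⊓ b) ⊔ c) ⊔ s := by rw [sup_assoc, sup_comm s c, sup_assoc]
            have h5 : (a ⊔ c) ⊓ (((a ⊓ b) ⊔ c) ⊔ s)
                = ((a ⊔ c) ⊓ ((a ⊓ b) ⊔ c)) ⊔ ((a ⊔ c) ⊓ s) := hP3 _ _
            have h6 : (a ⊔ c) ⊓ ((a ⊓ b) ⊔ c) = (a ⊓ b) ⊔ c :=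
              inf_eq_right.2 (sup_le (inf_le_left.trans le_sup_left) le_sup_right)
            rcases hatom (a ⊔ c) with hac | hac
            · have h7 : (a ⊔ c) ⊓ s = bot := by rw [inf_comm]; exact hac
              calc (a ⊔ c) ⊓ (b ⊔ c) ≤ (a ⊔ c) ⊓ (((a ⊓ b) ⊔ c) ⊔ s) := h4
                _ = (a ⊓ b) ⊔ c := by rw [h5, h6, h7, sup_eq_left.2 (hbot _)]
            · rcases hprime a c hac with h8 | h8
              · exact absurd h8 hsa
              · have h7 : (a ⊔ c) ⊓ s = s := inf_eq_right.2 hac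
                calc (a ⊔ c) ⊓ (b ⊔ c) ≤ (a ⊔ c) ⊓ (((a ⊓ b) ⊔ c) ⊔ s) := h4
                  _ = ((a ⊓ b) ⊔ c) ⊔ s := by rw [h5, h6, h7]
                  _ ≤ (a ⊓ b) ⊔ c := sup_le (le_refl _) (h8.trans le_sup_right)

/-! #### Instantiation in Com -/

theorem th_sup (x y : ComVariety) : (x ⊔ y).1.th = x.1.th ∩ y.1.th := rfl

theorem th_inf (x y : ComVariety) : (x ⊓ y).1.th = eqTh (x.1.th ∪ y.1.th) := rfl

theorem comLe_iff (x y : ComVariety) : x ≤ y ↔ y.1.th ⊆ x.1.th := Iff.rfl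

theorem th_SL : SLcom.1.th = SEqC := Schar

theorem th_T : Tcom.1.th = Set.univ := by
  apply Set.eq_univ_of_forall
  intro e
  intro T _ hT
  exact hT e (Set.mem_univ e)

theorem hbot_com : ∀ x : ComVariety, Tcom ≤ x := by
  intro x
  rw [comLe_iff, th_T]
  exact Set.subset_univ _

theorem hsne_com : SLcom ≠ Tcom := by
  intro h
  have h2 : Tcom.1.th ⊆ SEqC := by
    rw [← h, th_SL]
  have h3 : (xw, yw) ∈ Tcom.1.th := by
    rw [th_T]
    trivial
  have h4 := h2 h3
  have h5 : cont xw = cont yw := h4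
  rw [xw, yw, cont_of, cont_of] at h5
  have : (0 : ℕ) = 1 := Finset.singleton_injective h5
  omega

theorem witness_of_not_sub {x : ComVariety} (h : ¬ x.1.th ⊆ SEqC) :
    ∃ u₀ v₀ : Word, (u₀, v₀) ∈ x.1.th ∧ ∃ k, k ∈ cont u₀ ∧ k ∉ cont v₀ := by
  obtain ⟨e, hmem, hnc⟩ := Set.not_subset.1 h
  obtain ⟨u₀, v₀⟩ := e
  have hne : cont u₀ ≠ cont v₀ := hnc
  rcases exists_unequal_letter hne with ⟨k, hk1, hk2⟩ | ⟨k, hk1, hk2⟩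
  · exact ⟨u₀, v₀, hmem, k, hk1, hk2⟩
  · refine ⟨v₀, u₀, ?_, k, hk1, hk2⟩
    rw [← x.1.closed]
    exact eqTh_symm (by rw [x.1.closed]; exact hmem)

theorem hatom_com : ∀ x : ComVariety, SLcom ⊓ x = Tcom ∨ SLcom ≤ x := by
  intro x
  by_cases h : x.1.th ⊆ SEqC
  · right
    rw [comLe_iff, th_SL]
    exact h
  · left
    apply Subtype.ext
    apply SgVariety.ext'
    show eqTh (SLvar.th ∪ x.1.th) = trivialVar.th
    obtain ⟨u₀, v₀, hmem, k, hk1, hk2⟩ := witness_of_not_sub h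
    rw [eqTh_union_S_eq_univ hmem hk1 hk2]
    exact th_T.symm

theorem hprime_com : ∀ x y : ComVariety, SLcom ≤ x ⊔ y → SLcom ≤ x ∨ SLcom ≤ y := by
  intro x y h
  by_contra hcon
  push_neg at hcon
  have hx : ¬ x.1.th ⊆ SEqC := fun hs => hcon.1 (by rw [comLe_iff, th_SL]; exact hs)
  have hy : ¬ y.1.th ⊆ SEqC := fun hs => hcon.2 (by rw [comLe_iff, th_SL]; exact hs)
  obtain ⟨u₁, v₁, hm1, k₁, hk11, hk12⟩ := witness_of_not_sub hx
  obtain ⟨u₂, v₂, hm2, k₂, hk21, hk22⟩ := witness_of_not_sub hy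
  obtain ⟨a₁, Q₁, ha₁, hQ₁, hlaw₁⟩ := law_of_unequal x.2 hm1 hk11 hk12
  obtain ⟨a₂, Q₂, ha₂, hQ₂, hlaw₂⟩ := law_of_unequal y.2 hm2 hk21 hk22
  have ha12 : 1 ≤ a₁ * a₂ := by
    calc 1 ≤ a₁ := ha₁
      _ ≤ a₁ * a₂ := Nat.le_mul_of_pos_right _ ha₂
  set E : SgId := (spow xw (a₁ * a₂ - 1) * spow yw (Q₁ + Q₂), spow yw (Q₁ + Q₂)) with hE
  have hEx : E ∈ x.1.th := by
    rw [← x.1.closed]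
    intro T _ hT σ
    apply WithOne.coe_inj.1
    show ((FreeSemigroup.lift σ (spow xw (a₁ * a₂ - 1) * spow yw (Q₁ + Q₂)) : T) : WithOne T)
      = ((FreeSemigroup.lift σ (spow yw (Q₁ + Q₂)) : T) : WithOne T)
    rw [map_mul, WithOne.coe_mul, lift_spow, lift_spow, coe_spow, coe_spow,
      show a₁ * a₂ - 1 + 1 = a₁ * a₂ from by omega]
    have h9 := law_iterT (hlaw₁ T hT) (FreeSemigroup.lift σ xw) (FreeSemigroup.lift σ yw)
      a₂ (Q₁ + Q₂ + 1) (by omega)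
    exact h9
  have hEy : E ∈ y.1.th := by
    rw [← y.1.closed]
    intro T _ hT σ
    apply WithOne.coe_inj.1
    show ((FreeSemigroup.lift σ (spow xw (a₁ * a₂ - 1) * spow yw (Q₁ + Q₂)) : T) : WithOne T)
      = ((FreeSemigroup.lift σ (spow yw (Q₁ + Q₂)) : T) : WithOne T)
    rw [map_mul, WithOne.coe_mul, lift_spow, lift_spow, coe_spow, coe_spow,
      show a₁ * a₂ - 1 + 1 = a₁ * a₂ from by omega, show a₁ * a₂ = a₂ * a₁ from by ring]
    have h9 := law_iterT (hlaw₂ T hT) (FreeSemigroup.lift σ xw) (FreeSemigroup.lift σ yw)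
      a₁ (Q₁ + Q₂ + 1) (by omega)
    exact h9
  have hmemS : E ∈ SLcom.1.th := by
    rw [comLe_iff, th_sup] at h
    exact h ⟨hEx, hEy⟩
  rw [th_SL] at hmemS
  have hcnt : cont E.1 = cont E.2 := hmemS
  have h0 : (0 : ℕ) ∈ cont E.1 := by
    rw [hE]
    show (0 : ℕ) ∈ cont (spow xw (a₁ * a₂ - 1) * spow yw (Q₁ + Q₂))
    rw [cont_mul, cont_spow, cont_spow, xw, yw, cont_of, cont_of]
    simp
  have h1 : (0 : ℕ) ∉ cont E.2 := by
    rw [hE]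
    show (0 : ℕ) ∉ cont (spow yw (Q₁ + Q₂))
    rw [cont_spow, yw, cont_of]
    simp
  rw [hcnt] at h0
  exact h1 h0

theorem hA_com : ∀ x y : ComVariety, ¬ SLcom ≤ x → x ⊓ (y ⊔ SLcom) = x ⊓ y := by
  intro x y hx
  have hxs : ¬ x.1.th ⊆ SEqC := fun hs => hx (by rw [comLe_iff, th_SL]; exact hs)
  obtain ⟨u₀, v₀, hm0, k₀, hk0, hk0'⟩ := witness_of_not_sub hxs
  apply le_antisymm
  · rw [comLe_iff]
    show (x ⊓ y).1.th ⊆ (x ⊓ (y ⊔ SLcom)).1.th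
    rw [th_inf, th_inf, th_sup]
    have hrw : y.1.th ∩ SLcom.1.th = y.1.th ∩ SEqC := by rw [th_SL]
    rw [hrw]
    exact factA_incl x.1.closed y.1.closed x.2 y.2 hm0 hk0 hk0'
  · exact inf_le_inf_left x le_sup_left

theorem hM_com : ∀ x y : ComVariety, SLcom ≤ y → (x ⊔ SLcom) ⊓ y = (x ⊓ y) ⊔ SLcom := by
  intro x y hy
  have hys : y.1.th ⊆ SEqC := by
    rw [comLe_iff, th_SL] at hy
    exact hy
  apply le_antisymm
  · rw [comLe_iff]
    show ((x ⊓ y) ⊔ SLcom).1.th ⊆ ((x ⊔ SLcom) ⊓ y).1.th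
    rw [th_sup, th_inf, th_inf, th_sup, th_SL]
    rintro ⟨p, q⟩ ⟨h1, h2⟩
    exact lemmaM x.1.closed y.1.closed y.2 hys h1 h2
  · exact sup_le (le_inf (inf_le_left.trans le_sup_left) inf_le_right)
      (le_inf le_sup_right hy)

end Aux18

/-- A commutative semigroup variety `V` is upper-modular in
**Com** iff `V ∨ SL` is; likewise for costandard. -/
theorem upperModular_and_costandard_join_SL (V : ComVariety) :
    (IsUpperModular V ↔ IsUpperModular (V ⊔ SLcom)) ∧
    (IsCostandard V ↔ IsCostandard (V ⊔ SLcom)) :=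
  Aux18.lattice_main SLcom Tcom Aux18.hbot_com Aux18.hsne_com Aux18.hatom_com
    Aux18.hprime_com Aux18.hA_com Aux18.hM_com V
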